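/- arXiv:1608.00953 — 6 statements merged into one kernel-verified Lean document; each statement's English description precedes it below -/
import Mathlib

section
/- Suppose s < 1, m + s > 1, k > -1, and 0 ≤ x < 1. Then ∫_0^1 (1-y)^{-s} (1-xy)^{-m} y^k dy ≤ C(1-x)^{1-s-m} for a finite constant C depending only on s, m, k. -/
open MeasureTheory intervalIntegral

private lemma two_rpow_bound {a p : ℝ} (h1 : 1/2 ≤ a) (h2 : a ≤ 1) :
    a ^ p ≤ 2 ^ |p| := by
  have ha : 0 < a := by linarith
  rw [Real.rpow_def_of_pos ha, Real.rpow_def_of_pos (by norm_num : (0:ℝ) < 2)]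
  apply Real.exp_le_exp.2
  have hla : |Real.log a| ≤ Real.log 2 := by
    have h0 : Real.log a ≤ 0 := Real.log_nonpos ha.le h2
    rw [abs_of_nonpos h0, ← Real.log_inv]
    have hi : a⁻¹ ≤ 2 := by
      rw [inv_le_comm₀ ha (by norm_num)]
      linarith
    exact Real.log_le_log (by positivity) hi
  calc Real.log a * p ≤ |Real.log a * p| := le_abs_self _
    _ = |Real.log a| * |p| := abs_mul _ _
    _ ≤ Real.log 2 * |p| := mul_le_mul_of_nonneg_right hla (abs_nonneg p)

set_option maxHeartbeats 2000000 in
theorem stmt_6 (s m k : ℝ) (hs : s < 1) (hms : 1 < m + s) (hk : -1 < k) :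
    ∃ C : ℝ, 0 < C ∧ ∀ x : ℝ, 0 ≤ x → x < 1 →
      ∫ y in (0:ℝ)..1, (1 - y) ^ (-s) * (1 - x * y) ^ (-m) * y ^ k
        ≤ C * (1 - x) ^ (1 - s - m) := by
  have hm : 0 < m := by linarith
  have hk1 : (0:ℝ) < k + 1 := by linarith
  have h1s : (0:ℝ) < 1 - s := by linarith
  have hsm : (0:ℝ) < m + s - 1 := by linarith
  set c0 : ℝ := 2^|s| * 2^|m| * ((1/2:ℝ)^(k+1)/(k+1)) with hc0
  set c1 : ℝ := 2^|k| * 2^|s-1| * ((1/2:ℝ)^(1-s)/(1-s)) with hc1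
  set c2 : ℝ := 2^|k| / (m+s-1) with hc2
  set c3 : ℝ := 2^|k| / (1-s) with hc3
  have hc0p : 0 < c0 := by rw [hc0]; positivity
  have hc1p : 0 < c1 := by rw [hc1]; positivity
  have hc2p : 0 < c2 := by rw [hc2]; positivity
  have hc3p : 0 < c3 := by rw [hc3]; positivity
  refine ⟨c0 + c1 + c2 + c3, by positivity, ?_⟩
  intro x hx0 hx1
  have hx' : (0:ℝ) < 1 - x := by linarith
  set f : ℝ → ℝ := fun y => (1 - y) ^ (-s) * (1 - x * y) ^ (-m) * y ^ k with hf
  set P : ℝ := (1 - x) ^ (1 - s - m) with hP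
  have hP1 : 1 ≤ P :=
    Real.one_le_rpow_of_pos_of_le_one_of_nonpos hx' (by linarith) (by linarith)
  have hPpos : 0 < P := lt_of_lt_of_le one_pos hP1
  have mf : Measurable f := by fun_prop
  have fnonneg : ∀ y ∈ Set.Icc (0:ℝ) 1, 0 ≤ f y := by
    intro y hy
    obtain ⟨hy0, hy1⟩ := hy
    have hxy : x * y ≤ y := by nlinarith
    exact mul_nonneg (mul_nonneg (Real.rpow_nonneg (by linarith) _)
      (Real.rpow_nonneg (by linarith) _)) (Real.rpow_nonneg hy0 _)
  -- integrability of (1-y)^(-s) on subintervals of [0,1]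
  have gs_int : ∀ a b : ℝ, IntervalIntegrable (fun y : ℝ => (1-y)^(-s)) volume (1-a) (1-b) := by
    intro a b
    exact (intervalIntegrable_rpow' (by linarith : (-1:ℝ) < -s) (a := a) (b := b)).comp_sub_left 1
  -- Region [0, 1/2]
  have g0int : IntervalIntegrable (fun y : ℝ => y ^ k * (2^|s| * 2^|m|)) volume 0 (1/2) :=
    (intervalIntegrable_rpow' hk).mul_const _
  have bound0 : ∀ y ∈ Set.Icc (0:ℝ) (1/2), f y ≤ y ^ k * (2^|s| * 2^|m|) := by
    rintro y ⟨hy0, hy2⟩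
    have hxy : x*y ≤ y := by nlinarith
    have hxy0 : 0 ≤ x*y := mul_nonneg hx0 hy0
    have h1 : (1 - y)^(-s) ≤ 2^|s| := by
      have := two_rpow_bound (a := 1 - y) (p := -s) (by linarith) (by linarith)
      rwa [abs_neg] at this
    have h2 : (1 - x*y)^(-m) ≤ 2^|m| := by
      have := two_rpow_bound (a := 1 - x*y) (p := -m) (by linarith) (by linarith)
      rwa [abs_neg] at this
    calc f y = (1-y)^(-s) * (1 - x*y)^(-m) * y^k := rfl
      _ ≤ 2^|s| * 2^|m| * y^k := by
          apply mul_le_mul (mul_le_mul h1 h2 (Real.rpow_nonneg (by linarith) _) (by positivity))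
            le_rfl (Real.rpow_nonneg hy0 _) (by positivity)
      _ = y^k * (2^|s| * 2^|m|) := by ring
  have fint0 : IntervalIntegrable f volume 0 (1/2) := by
    apply g0int.mono_fun' mf.aestronglyMeasurable
    filter_upwards [ae_restrict_mem measurableSet_uIoc] with y hy
    rw [Set.uIoc_of_le (by norm_num : (0:ℝ) ≤ 1/2)] at hy
    have hyIcc : y ∈ Set.Icc (0:ℝ) (1/2) := ⟨hy.1.le, hy.2⟩
    rw [Real.norm_eq_abs, abs_of_nonneg (fnonneg y ⟨hyIcc.1, by linarith [hyIcc.2]⟩)]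
    exact bound0 y hyIcc
  have piece0 : ∫ y in (0:ℝ)..(1/2), f y ≤ c0 := by
    have int0val : ∫ y in (0:ℝ)..(1/2), y ^ k * (2^|s| * 2^|m|) = c0 := by
      rw [intervalIntegral.integral_mul_const, integral_rpow (Or.inl hk),
        Real.zero_rpow (by linarith : k+1 ≠ 0), hc0]
      ring
    rw [← int0val]
    exact intervalIntegral.integral_mono_on (by norm_num) fint0 g0int bound0
  -- bound on (1-x*y)^(-m) for y ∈ [0,1]
  have hxm : ∀ y : ℝ, y ≤ 1 → (1 - x*y)^(-m) ≤ (1-x)^(-m) := by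
    intro y hy1
    have : 1 - x ≤ 1 - x*y := by nlinarith
    exact Real.rpow_le_rpow_of_nonpos hx' this (by linarith)
  -- generic bound on the right region [a, 1] where a ≥ 1/2
  have boundR : ∀ a : ℝ, 1/2 ≤ a → ∀ y ∈ Set.Icc a (1:ℝ),
      f y ≤ (1-y)^(-s) * ((1-x)^(-m) * 2^|k|) := by
    rintro a ha y ⟨hy1, hy2⟩
    have h2 : (1 - x*y)^(-m) ≤ (1-x)^(-m) := hxm y hy2
    have h3 : y^k ≤ 2^|k| := two_rpow_bound (by linarith) hy2
    calc f y = (1-y)^(-s) * ((1 - x*y)^(-m) * y^k) := mul_assoc _ _ _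
      _ ≤ (1-y)^(-s) * ((1-x)^(-m) * 2^|k|) := by
          apply mul_le_mul_of_nonneg_left _ (Real.rpow_nonneg (by linarith) _)
          apply mul_le_mul h2 h3 (Real.rpow_nonneg (by linarith) _)
            (Real.rpow_nonneg (by linarith) _)
  have fintR : ∀ a : ℝ, 1/2 ≤ a → a ≤ 1 → IntervalIntegrable f volume a 1 := by
    intro a ha ha1
    have gint : IntervalIntegrable (fun y : ℝ => (1-y)^(-s) * ((1-x)^(-m) * 2^|k|))
        volume a 1 := by
      have := (gs_int (1-a) 0).mul_const ((1-x)^(-m) * 2^|k|)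
      norm_num at this ⊢
      convert this using 2
    apply gint.mono_fun' mf.aestronglyMeasurable
    filter_upwards [ae_restrict_mem measurableSet_uIoc] with y hy
    rw [Set.uIoc_of_le ha1] at hy
    have hyIcc : y ∈ Set.Icc a 1 := ⟨hy.1.le, hy.2⟩
    rw [Real.norm_eq_abs, abs_of_nonneg (fnonneg y ⟨by linarith [hyIcc.1], hyIcc.2⟩)]
    exact boundR a ha y hyIcc
  have intRval : ∀ a : ℝ, a ≤ 1 → ∫ y in a..1, (1-y)^(-s) * ((1-x)^(-m) * 2^|k|)
      = ((1-a)^(1-s)/(1-s)) * ((1-x)^(-m) * 2^|k|) := by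
    intro a ha
    rw [intervalIntegral.integral_mul_const]
    congr 1
    rw [intervalIntegral.integral_comp_sub_left (fun u : ℝ => u^(-s)) 1]
    norm_num
    rw [integral_rpow (Or.inl (by linarith : (-1:ℝ) < -s)),
      Real.zero_rpow (by linarith : -s+1 ≠ 0), show (-s+1:ℝ) = 1-s by ring]
    ring
  rcases le_total x (1/2) with hx2 | hx2
  · -- Case x ≤ 1/2 : split [0,1] = [0,1/2] ∪ [1/2,1]
    have fint2 : IntervalIntegrable f volume (1/2) 1 := fintR (1/2) le_rfl (by norm_num)
    have g2int : IntervalIntegrable (fun y : ℝ => (1-y)^(-s) * ((1-x)^(-m) * 2^|k|))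
        volume (1/2) 1 := by
      have := (gs_int (1/2) 0).mul_const ((1-x)^(-m) * 2^|k|)
      norm_num at this
      exact this
    have piece2 : ∫ y in (1/2:ℝ)..1, f y
        ≤ ((1/2:ℝ)^(1-s)/(1-s)) * ((1-x)^(-m) * 2^|k|) := by
      have := intervalIntegral.integral_mono_on (by norm_num : (1/2:ℝ) ≤ 1) fint2 g2int
        (boundR (1/2) le_rfl)
      rwa [intRval (1/2) (by norm_num), show (1 - 1/2 : ℝ) = 1/2 by norm_num] at this
    have hxsplit : (1-x)^(-m) = (1-x)^(s-1) * P := by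
      rw [hP, ← Real.rpow_add hx', show (s-1+(1-s-m):ℝ) = -m by ring]
    have piece2' : ((1/2:ℝ)^(1-s)/(1-s)) * ((1-x)^(-m) * 2^|k|) ≤ c1 * P := by
      have hb : (1-x)^(s-1) ≤ 2^|s-1| := two_rpow_bound (by linarith) (by linarith)
      calc ((1/2:ℝ)^(1-s)/(1-s)) * ((1-x)^(-m) * 2^|k|)
          = (2^|k| * ((1/2:ℝ)^(1-s)/(1-s)) * (1-x)^(s-1)) * P := by rw [hxsplit]; ring
        _ ≤ (2^|k| * ((1/2:ℝ)^(1-s)/(1-s)) * 2^|s-1|) * P := by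
            apply mul_le_mul_of_nonneg_right _ hPpos.le
            apply mul_le_mul_of_nonneg_left hb (by positivity)
        _ = c1 * P := by rw [hc1]; ring
    have hsplit : ∫ y in (0:ℝ)..1, f y
        = (∫ y in (0:ℝ)..(1/2), f y) + ∫ y in (1/2:ℝ)..1, f y :=
      (intervalIntegral.integral_add_adjacent_intervals fint0 fint2).symm
    rw [hsplit]
    have h1 : c0 + c1 * P ≤ (c0 + c1 + c2 + c3) * P := by nlinarith
    linarith [piece2.trans piece2']
  · -- Case 1/2 ≤ x : split [0,1] = [0,1/2] ∪ [1/2,x] ∪ [x,1]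
    have hx12 : (1:ℝ)/2 ≤ x := hx2
    -- middle region [1/2, x]
    have g1cont : ContinuousOn (fun y : ℝ => (1-y)^(-s-m) * 2^|k|) (Set.uIcc (1/2) x) := by
      apply ContinuousOn.mul _ continuousOn_const
      apply ContinuousOn.rpow_const ((continuous_const.sub continuous_id).continuousOn)
      intro y hy
      rw [Set.uIcc_of_le hx12] at hy
      exact Or.inl (ne_of_gt (by show (0:ℝ) < 1 - y; linarith [hy.2]))
    have g1int : IntervalIntegrable (fun y : ℝ => (1-y)^(-s-m) * 2^|k|) volume (1/2) x :=
      g1cont.intervalIntegrable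
    have bound1 : ∀ y ∈ Set.Icc (1/2:ℝ) x, f y ≤ (1-y)^(-s-m) * 2^|k| := by
      rintro y ⟨hy1, hy2⟩
      have hy1' : (0:ℝ) < 1 - y := by linarith
      have h2 : (1 - x*y)^(-m) ≤ (1-y)^(-m) :=
        Real.rpow_le_rpow_of_nonpos hy1' (by nlinarith) (by linarith)
      have h3 : y^k ≤ 2^|k| := two_rpow_bound (by linarith) (by linarith)
      calc f y = (1-y)^(-s) * (1 - x*y)^(-m) * y^k := rfl
        _ ≤ (1-y)^(-s) * (1-y)^(-m) * 2^|k| := by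
            apply mul_le_mul (mul_le_mul_of_nonneg_left h2 (Real.rpow_nonneg hy1'.le _))
              h3 (Real.rpow_nonneg (by linarith) _)
              (mul_nonneg (Real.rpow_nonneg hy1'.le _) (Real.rpow_nonneg hy1'.le _))
        _ = (1-y)^(-s-m) * 2^|k| := by
            rw [← Real.rpow_add hy1', show (-s + -m : ℝ) = -s-m by ring]
    have fint1 : IntervalIntegrable f volume (1/2) x := by
      apply g1int.mono_fun' mf.aestronglyMeasurable
      filter_upwards [ae_restrict_mem measurableSet_uIoc] with y hy
      rw [Set.uIoc_of_le hx12] at hy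
      have hyIcc : y ∈ Set.Icc (1/2:ℝ) x := ⟨hy.1.le, hy.2⟩
      rw [Real.norm_eq_abs,
        abs_of_nonneg (fnonneg y ⟨by linarith [hyIcc.1], by linarith [hyIcc.2]⟩)]
      exact bound1 y hyIcc
    have piece1 : ∫ y in (1/2:ℝ)..x, f y ≤ c2 * P := by
      have int1val : ∫ y in (1/2:ℝ)..x, (1-y)^(-s-m) * 2^|k|
          = (((1/2:ℝ)^(1-s-m) - (1-x)^(1-s-m)) / (1-s-m)) * 2^|k| := by
        rw [intervalIntegral.integral_mul_const]
        congr 1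
        rw [intervalIntegral.integral_comp_sub_left (fun u : ℝ => u^(-s-m)) 1]
        norm_num
        have hne : (-s-m:ℝ) ≠ -1 := by intro h; linarith [neg_injective (by linarith [h] : -(s+m) = -(1:ℝ))]
        have hmem : (0:ℝ) ∉ Set.uIcc (1-x) (1/2:ℝ) := by
          intro h
          rw [Set.uIcc_of_le (by linarith : (1:ℝ)-x ≤ 1/2)] at h
          linarith [h.1]
        rw [integral_rpow (Or.inr ⟨hne, hmem⟩),
          show (-s-m+1:ℝ) = 1-s-m by ring]
      have step := intervalIntegral.integral_mono_on hx12 fint1 g1int bound1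
      rw [int1val] at step
      apply step.trans
      have e1 : ∀ A B : ℝ, (A - B) / (1-s-m) = (B - A) / (m+s-1) := by
        intro A B
        rw [show (1-s-m:ℝ) = -(m+s-1) by ring, div_neg, ← neg_div, neg_sub]
      rw [e1, ← hP, hc2]
      have hq : (0:ℝ) ≤ (1/2:ℝ)^(1-s-m) := Real.rpow_nonneg (by norm_num) _
      have h2k : (0:ℝ) ≤ 2^|k| := Real.rpow_nonneg (by norm_num) _
      rw [div_mul_eq_mul_div, div_mul_eq_mul_div, div_le_div_iff_of_pos_right hsm]
      nlinarith [mul_nonneg hq h2k]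
    -- right region [x, 1]
    have fint2 : IntervalIntegrable f volume x 1 := fintR x hx12 hx1.le
    have g2int : IntervalIntegrable (fun y : ℝ => (1-y)^(-s) * ((1-x)^(-m) * 2^|k|))
        volume x 1 := by
      have := (gs_int (1-x) 0).mul_const ((1-x)^(-m) * 2^|k|)
      norm_num at this
      exact this
    have piece2 : ∫ y in x..1, f y ≤ c3 * P := by
      have step := intervalIntegral.integral_mono_on hx1.le fint2 g2int (boundR x hx12)
      rw [intRval x hx1.le] at step
      apply step.trans
      have e2 : ((1-x)^(1-s)/(1-s)) * ((1-x)^(-m) * 2^|k|) = c3 * P := by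
        rw [hc3, hP, show (1-s-m:ℝ) = (1-s) + -m by ring, Real.rpow_add hx']
        ring
      rw [e2]
    have hsplitA : ∫ y in (0:ℝ)..x, f y
        = (∫ y in (0:ℝ)..(1/2), f y) + ∫ y in (1/2:ℝ)..x, f y :=
      (intervalIntegral.integral_add_adjacent_intervals fint0 fint1).symm
    have hsplit : ∫ y in (0:ℝ)..1, f y = (∫ y in (0:ℝ)..x, f y) + ∫ y in x..1, f y :=
      (intervalIntegral.integral_add_adjacent_intervals (fint0.trans fint1) fint2).symm
    rw [hsplit, hsplitA]
    have h1 : c0 + c2 * P + c3 * P ≤ (c0 + c1 + c2 + c3) * P := by nlinarith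
    linarith [piece0, piece1, piece2]
end

section
/- Suppose s < 1, m + s > 1, k > -1, 2 + k > s + m, and 2 + k > s. Then for all 0 ≤ x < 1, ∫_0^1 (1-y)^{-s}(1-xy)^{-m} y^k dy ≤ (Γ(s+m-1)Γ(1-s)/Γ(m)) · (1-x)^{1-s-m}. -/
open MeasureTheory Set

lemma beta_intable (a b : ℝ) (ha : 0 < a) (hb : 0 < b) :
    IntegrableOn (fun u : ℝ => u ^ (a - 1) * (1 - u) ^ (b - 1)) (Ioc 0 1) := by
  have h := Complex.betaIntegral_convergent (u := (a : ℂ)) (v := (b : ℂ))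
    (by simpa using ha) (by simpa using hb)
  rw [intervalIntegrable_iff_integrableOn_Ioc_of_le (by norm_num)] at h
  have h2 : IntegrableOn (fun x : ℝ => ((x:ℂ) ^ ((a:ℂ) - 1) * (1 - (x:ℂ)) ^ ((b:ℂ) - 1)).re) (Ioc 0 1) := h.re
  refine h2.congr_fun (fun x hx => ?_) measurableSet_Ioc
  beta_reduce
  rw [show ((a:ℂ) - 1) = ((a - 1 : ℝ) : ℂ) by push_cast; ring,
    show ((b:ℂ) - 1) = ((b - 1 : ℝ) : ℂ) by push_cast; ring,
    show (1 - (x:ℂ)) = ((1 - x : ℝ) : ℂ) by push_cast; ring,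
    ← Complex.ofReal_cpow hx.1.le, ← Complex.ofReal_cpow (by linarith [hx.2] : (0:ℝ) ≤ 1 - x),
    ← Complex.ofReal_mul, Complex.ofReal_re]

lemma beta_val (a b : ℝ) (ha : 0 < a) (hb : 0 < b) :
    ∫ u in Ioc (0:ℝ) 1, u ^ (a - 1) * (1 - u) ^ (b - 1)
      = Real.Gamma a * Real.Gamma b / Real.Gamma (a + b) := by
  have h := Complex.Gamma_mul_Gamma_eq_betaIntegral (s := (a : ℂ)) (t := (b : ℂ))
    (by simpa using ha) (by simpa using hb)
  have hint : Complex.betaIntegral (a : ℂ) (b : ℂ)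
      = ((∫ u in Ioc (0:ℝ) 1, u ^ (a - 1) * (1 - u) ^ (b - 1) : ℝ) : ℂ) := by
    rw [Complex.betaIntegral, intervalIntegral.integral_of_le (by norm_num)]
    have heq : (∫ x in Ioc (0:ℝ) 1, (x:ℂ) ^ ((a:ℂ) - 1) * (1 - (x:ℂ)) ^ ((b:ℂ) - 1))
        = ∫ x in Ioc (0:ℝ) 1, ((x ^ (a - 1) * (1 - x) ^ (b - 1) : ℝ) : ℂ) := by
      refine setIntegral_congr_fun measurableSet_Ioc (fun x hx => ?_)
      rw [show ((a:ℂ) - 1) = ((a - 1 : ℝ) : ℂ) by push_cast; ring,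
        show ((b:ℂ) - 1) = ((b - 1 : ℝ) : ℂ) by push_cast; ring,
        show (1 - (x:ℂ)) = ((1 - x : ℝ) : ℂ) by push_cast; ring,
        ← Complex.ofReal_cpow hx.1.le, ← Complex.ofReal_cpow (by linarith [hx.2] : (0:ℝ) ≤ 1 - x),
        ← Complex.ofReal_mul]
    rw [heq]
    exact integral_ofReal
  rw [hint] at h
  have hGab : Real.Gamma (a + b) ≠ 0 := (Real.Gamma_pos_of_pos (by linarith)).ne'
  have := congrArg Complex.re h
  rw [← Complex.ofReal_add, Complex.Gamma_ofReal, Complex.Gamma_ofReal, Complex.Gamma_ofReal,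
    ← Complex.ofReal_mul, ← Complex.ofReal_mul, Complex.ofReal_inj] at h
  field_simp
  linarith [h]

lemma alg (s m x u : ℝ) (hu0 : 0 < u) (hA : 0 < 1 - u) (hC : 0 < 1 - x) (hD' : 0 < 1 - x*u) :
    (1-x)/(1-x*u)^2 * ((u*(1-x)/(1-x*u)) ^ (-s) * ((1-x)/(1-x*u)) ^ (-m) * ((1-u)/(1-x*u)) ^ (s+m-2))
      = (1-x) ^ (1-s-m) * (u ^ (-s) * (1-u) ^ (s+m-2)) := by
  have key : ∀ a b : ℝ, 0 < a → 0 < b → Real.log a = Real.log b → a = b := by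
    intro a b ha hb h
    rw [← Real.exp_log ha, ← Real.exp_log hb, h]
  apply key _ _ (by positivity) (by positivity)
  repeat first
    | rw [Real.log_rpow (by positivity)]
    | rw [Real.log_pow]
    | rw [Real.log_mul (by positivity) (by positivity)]
    | rw [Real.log_div (by positivity) (by positivity)]
  ring

theorem stmt_7 (s m k : ℝ) (hs : s < 1) (hms : 1 < m + s) (hk : -1 < k)
    (h1 : s + m < 2 + k) (h2 : s < 2 + k) :
    ∀ x : ℝ, 0 ≤ x → x < 1 →
      ∫ y in (0:ℝ)..1, (1 - y) ^ (-s) * (1 - x * y) ^ (-m) * y ^ k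
        ≤ (Real.Gamma (s + m - 1) * Real.Gamma (1 - s) / Real.Gamma m) *
            (1 - x) ^ (1 - s - m) := by
  intro x hx0 hx1
  have hm : 0 < m := by linarith
  have hC : 0 < 1 - x := by linarith
  set f : ℝ → ℝ := fun u => (1 - u) / (1 - x * u) with hf
  set G : ℝ → ℝ := fun y => (1 - y) ^ (-s) * (1 - x * y) ^ (-m) * y ^ (s + m - 2) with hG
  have hD : ∀ u ∈ Ioo (0:ℝ) 1, 0 < 1 - x * u := by
    intro u hu
    nlinarith [hu.1, hu.2, mul_le_of_le_one_right hx0 hu.2.le]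
  have hmaps : ∀ u ∈ Ioo (0:ℝ) 1, f u ∈ Ioo (0:ℝ) 1 := by
    intro u hu
    have hD' := hD u hu
    constructor
    · exact div_pos (by linarith [hu.2]) hD'
    · rw [div_lt_one hD']
      nlinarith [hu.1, hu.2]
  have hinv : ∀ u ∈ Ioo (0:ℝ) 1, f (f u) = u := by
    intro u hu
    have hD' := hD u hu
    have e1 : 1 - f u = u * (1 - x) / (1 - x * u) := by
      simp only [hf]
      rw [one_sub_div hD'.ne']
      congr 1
      ring
    have e2 : 1 - x * f u = (1 - x) / (1 - x * u) := by
      simp only [hf]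
      rw [← mul_div_assoc, one_sub_div hD'.ne']
      congr 1
      ring
    show (1 - f u) / (1 - x * f u) = u
    rw [e1, e2, div_div_div_cancel_right₀]
    · exact mul_div_cancel_right₀ u hC.ne'
    · exact hD'.ne'
  have himg : f '' Ioo 0 1 = Ioo 0 1 := by
    apply Subset.antisymm
    · rintro y ⟨u, hu, rfl⟩; exact hmaps u hu
    · intro y hy; exact ⟨f y, hmaps y hy, hinv y hy⟩
  have hinj : InjOn f (Ioo 0 1) := by
    intro a ha b hb hab
    rw [← hinv a ha, ← hinv b hb, hab]
  have hderiv : ∀ u ∈ Ioo (0:ℝ) 1,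
      HasDerivWithinAt f ((x - 1) / (1 - x * u) ^ 2) (Ioo 0 1) u := by
    intro u hu
    have hD' := hD u hu
    have h1d : HasDerivAt (fun u : ℝ => 1 - u) (-1) u := by
      simpa using (hasDerivAt_id u).const_sub 1
    have h2d : HasDerivAt (fun u : ℝ => 1 - x * u) (-x) u := by
      simpa using ((hasDerivAt_id u).const_mul x).const_sub 1
    have := (h1d.div h2d hD'.ne').hasDerivWithinAt (s := Ioo (0:ℝ) 1)
    apply this.congr_deriv
    ring
  have hpt : ∀ u ∈ Ioo (0:ℝ) 1, |(x - 1) / (1 - x * u) ^ 2| • G (f u)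
      = (1 - x) ^ (1 - s - m) * (u ^ (-s) * (1 - u) ^ (s + m - 2)) := by
    intro u hu
    have hu0 : 0 < u := hu.1
    have hA : 0 < 1 - u := by linarith [hu.2]
    have hD' := hD u hu
    have e1 : 1 - f u = u * (1 - x) / (1 - x * u) := by
      simp only [hf]
      rw [one_sub_div hD'.ne']
      congr 1
      ring
    have e2 : 1 - x * f u = (1 - x) / (1 - x * u) := by
      simp only [hf]
      rw [← mul_div_assoc, one_sub_div hD'.ne']
      congr 1
      ring
    have habs : |(x - 1) / (1 - x * u) ^ 2| = (1 - x) / (1 - x * u) ^ 2 := by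
      rw [abs_div, abs_of_nonpos (by linarith : x - 1 ≤ 0), abs_of_pos (by positivity), neg_sub]
    have hGfu : G (f u) = (1 - f u) ^ (-s) * (1 - x * f u) ^ (-m) * (f u) ^ (s + m - 2) := rfl
    rw [smul_eq_mul, habs, hGfu, e1, e2, show f u = (1 - u) / (1 - x * u) from rfl]
    exact alg s m x u hu0 hA hC hD'
  have hsub : ∫ y in Ioo (0:ℝ) 1, G y
      = ∫ u in Ioo (0:ℝ) 1, |(x - 1) / (1 - x * u) ^ 2| • G (f u) := by
    have h := integral_image_eq_integral_abs_deriv_smul measurableSet_Ioo hderiv hinj G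
    rwa [himg] at h
  have hbetaint : IntegrableOn (fun u : ℝ => u ^ (-s) * (1 - u) ^ (s + m - 2)) (Ioo 0 1) := by
    have h := (beta_intable (1-s) (s+m-1) (by linarith) (by linarith)).mono_set
      (Ioo_subset_Ioc_self : Ioo (0:ℝ) 1 ⊆ Ioc 0 1)
    simpa [show (1:ℝ)-s-1 = -s by ring, show s+m-(1:ℝ)-1 = s+m-2 by ring] using h
  have hGint : IntegrableOn G (Ioo 0 1) := by
    rw [← himg, integrableOn_image_iff_integrableOn_abs_deriv_smul measurableSet_Ioo hderiv hinj]
    have hbm : IntegrableOn (fun u : ℝ => (1 - x) ^ (1 - s - m) * (u ^ (-s) * (1 - u) ^ (s + m - 2)))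
        (Ioo 0 1) := hbetaint.const_mul _
    exact hbm.congr_fun (fun u hu => (hpt u hu).symm) measurableSet_Ioo
  have hGval : ∫ y in Ioo (0:ℝ) 1, G y
      = (Real.Gamma (s + m - 1) * Real.Gamma (1 - s) / Real.Gamma m) * (1 - x) ^ (1 - s - m) := by
    rw [hsub, setIntegral_congr_fun measurableSet_Ioo (fun u hu => hpt u hu),
      integral_const_mul, ← integral_Ioc_eq_integral_Ioo]
    have hb := beta_val (1-s) (s+m-1) (by linarith) (by linarith)
    rw [show (1:ℝ)-s-1 = -s by ring, show s+m-(1:ℝ)-1 = s+m-2 by ring,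
      show 1-s+(s+m-1) = m by ring] at hb
    rw [hb]
    ring
  have hFle : ∀ y ∈ Ioo (0:ℝ) 1, (1 - y) ^ (-s) * (1 - x * y) ^ (-m) * y ^ k ≤ G y := by
    intro y hy
    have hDy := hD y hy
    have h1y : (0:ℝ) < 1 - y := by linarith [hy.2]
    have hy0 : (0:ℝ) < y := hy.1
    apply mul_le_mul_of_nonneg_left _ (by positivity)
    exact Real.rpow_le_rpow_of_exponent_ge hy.1 hy.2.le (by linarith)
  have hFint : IntegrableOn (fun y : ℝ => (1 - y) ^ (-s) * (1 - x * y) ^ (-m) * y ^ k) (Ioo 0 1) := by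
    apply Integrable.mono hGint
    · apply Measurable.aestronglyMeasurable
      fun_prop
    · rw [ae_restrict_iff' measurableSet_Ioo]
      filter_upwards with y hy
      have hDy := hD y hy
      have h1y : (0:ℝ) < 1 - y := by linarith [hy.2]
      have hy0 : (0:ℝ) < y := hy.1
      rw [Real.norm_eq_abs, Real.norm_eq_abs, abs_of_nonneg (by positivity),
        abs_of_nonneg (by positivity)]
      exact hFle y hy
  rw [intervalIntegral.integral_of_le zero_le_one, integral_Ioc_eq_integral_Ioo, ← hGval]
  exact setIntegral_mono_on hFint hGint measurableSet_Ioo hFle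
end

section
/- Let P(r,t) = (1-r²)/(1 - 2r cos t + r²) be the Poisson kernel, 0 < r < 1. Then the second derivative in t satisfies |∂²P/∂t²(r,t)| ≤ 16(1-r)t²/[(1-r)² + 4π^{-2}rt²]³ + 4(1-r)/[(1-r)² + 4π^{-2}rt²]² for 0 ≤ t ≤ π. -/
lemma aux_split (A B Q D : ℝ) (hA : 0 ≤ A) (hB : 0 ≤ B) (hQ : 0 < Q) (hQD : Q ≤ D) :
    (A + B * D) / D ^ 3 ≤ A / Q ^ 3 + B / Q ^ 2 := by
  have hD : 0 < D := lt_of_lt_of_le hQ hQD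
  have h1 : (A + B * D) / D ^ 3 = A / D ^ 3 + B / D ^ 2 := by
    field_simp
  rw [h1]
  have h3 : Q ^ 3 ≤ D ^ 3 := pow_le_pow_left₀ hQ.le hQD 3
  have h2 : Q ^ 2 ≤ D ^ 2 := pow_le_pow_left₀ hQ.le hQD 2
  exact add_le_add (div_le_div_of_nonneg_left hA (pow_pos hQ 3) h3)
    (div_le_div_of_nonneg_left hB (pow_pos hQ 2) h2)

lemma aux_num (r S T D : ℝ) (hr0 : 0 < r) (hr1 : r < 1) (hS : 0 ≤ S) (hST : S ≤ T)
    (hD : 0 < D) :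
    (1 - r ^ 2) * (8 * r ^ 2 * S + 2 * r * D) ≤ 16 * (1 - r) * T + 4 * (1 - r) * D := by
  nlinarith [mul_nonneg (mul_nonneg (by linarith : (0:ℝ) ≤ 1 - r)
      (by nlinarith : (0:ℝ) ≤ 2 - (1 + r) * r ^ 2)) hS,
    mul_nonneg (by linarith : (0:ℝ) ≤ 1 - r) (by linarith : (0:ℝ) ≤ T - S),
    mul_nonneg (mul_nonneg (by linarith : (0:ℝ) ≤ 1 - r) hD.le)
      (by nlinarith : (0:ℝ) ≤ 2 - (1 + r) * r)]

theorem stmt_13 (r : ℝ) (hr0 : 0 < r) (hr1 : r < 1) (t : ℝ)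
    (ht0 : 0 ≤ t) (htπ : t ≤ Real.pi) :
    |deriv (deriv (fun s : ℝ =>
        (1 - r ^ 2) / (1 - 2 * r * Real.cos s + r ^ 2))) t|
      ≤ 16 * (1 - r) * t ^ 2 / ((1 - r) ^ 2 + 4 * Real.pi⁻¹ ^ 2 * r * t ^ 2) ^ 3
        + 4 * (1 - r) / ((1 - r) ^ 2 + 4 * Real.pi⁻¹ ^ 2 * r * t ^ 2) ^ 2 := by
  have hπ := Real.pi_pos
  have hDpos : ∀ s : ℝ, (0:ℝ) < 1 - 2 * r * Real.cos s + r ^ 2 := by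
    intro s
    nlinarith [Real.cos_le_one s, sq_nonneg (1 - r)]
  have hDderiv : ∀ s : ℝ, HasDerivAt (fun u : ℝ => 1 - 2 * r * Real.cos u + r ^ 2)
      (2 * r * Real.sin s) s := by
    intro s
    have h1 := (Real.hasDerivAt_cos s).const_mul (2 * r)
    have h2 := ((hasDerivAt_const s (1:ℝ)).sub h1).add_const (r ^ 2)
    exact h2.congr_deriv (by ring)
  -- first derivative
  have hd1 : deriv (fun s : ℝ => (1 - r ^ 2) / (1 - 2 * r * Real.cos s + r ^ 2))
      = fun s => -((1 - r ^ 2) * (2 * r * Real.sin s)) / (1 - 2 * r * Real.cos s + r ^ 2) ^ 2 := by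
    funext s
    have h := (hasDerivAt_const s (1 - r ^ 2)).div (hDderiv s) (hDpos s).ne'
    rw [HasDerivAt.deriv (f := fun s : ℝ => (1 - r ^ 2) / (1 - 2 * r * Real.cos s + r ^ 2)) h]
    ring
  rw [hd1]
  -- second derivative
  have hN : HasDerivAt (fun s : ℝ => -((1 - r ^ 2) * (2 * r * Real.sin s)))
      (-((1 - r ^ 2) * (2 * r * Real.cos t))) t := by
    have h2 := (((Real.hasDerivAt_sin t).const_mul (2 * r)).const_mul (1 - r ^ 2)).neg
    exact h2.congr_deriv (by ring)
  have hM : HasDerivAt (fun s : ℝ => (1 - 2 * r * Real.cos s + r ^ 2) ^ 2)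
      (2 * (1 - 2 * r * Real.cos t + r ^ 2) * (2 * r * Real.sin t)) t := by
    have h := (hDderiv t).pow 2
    exact h.congr_deriv (by norm_num)
  have hDt := hDpos t
  have hMne : (1 - 2 * r * Real.cos t + r ^ 2) ^ 2 ≠ 0 := pow_ne_zero _ hDt.ne'
  have hd2 : deriv (fun s : ℝ => -((1 - r ^ 2) * (2 * r * Real.sin s))
        / (1 - 2 * r * Real.cos s + r ^ 2) ^ 2) t
      = (1 - r ^ 2) * (8 * r ^ 2 * Real.sin t ^ 2
          - 2 * r * Real.cos t * (1 - 2 * r * Real.cos t + r ^ 2))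
        / (1 - 2 * r * Real.cos t + r ^ 2) ^ 3 := by
    rw [HasDerivAt.deriv (f := fun s : ℝ => -((1 - r ^ 2) * (2 * r * Real.sin s))
          / (1 - 2 * r * Real.cos s + r ^ 2) ^ 2) (hN.div hM hMne), div_eq_div_iff (pow_ne_zero 2 hMne) (pow_ne_zero 3 hDt.ne')]
    ring
  rw [hd2]
  -- key bounds
  have h1rpos : (0:ℝ) < (1 - r) ^ 2 := pow_pos (by linarith) 2
  have hQpos : (0:ℝ) < (1 - r) ^ 2 + 4 * Real.pi⁻¹ ^ 2 * r * t ^ 2 :=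
    add_pos_of_pos_of_nonneg h1rpos (by positivity)
  have hQD : (1 - r) ^ 2 + 4 * Real.pi⁻¹ ^ 2 * r * t ^ 2 ≤ 1 - 2 * r * Real.cos t + r ^ 2 := by
    have hcos : Real.cos t ≤ 1 - 2 / Real.pi ^ 2 * t ^ 2 := by
      apply Real.cos_le_one_sub_mul_cos_sq
      rw [abs_of_nonneg ht0]
      exact htπ
    have hcos' : Real.cos t ≤ 1 - 2 * Real.pi⁻¹ ^ 2 * t ^ 2 := by
      have heq : 2 / Real.pi ^ 2 = 2 * Real.pi⁻¹ ^ 2 := by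
        rw [inv_pow]
        ring
      rwa [heq] at hcos
    nlinarith [mul_le_mul_of_nonneg_left hcos' (by linarith : (0:ℝ) ≤ 2 * r)]
  have hsin : Real.sin t ^ 2 ≤ t ^ 2 := Real.sin_sq_le_sq
  -- bound numerator
  have habs : |(1 - r ^ 2) * (8 * r ^ 2 * Real.sin t ^ 2
        - 2 * r * Real.cos t * (1 - 2 * r * Real.cos t + r ^ 2))|
      ≤ 16 * (1 - r) * t ^ 2 + 4 * (1 - r) * (1 - 2 * r * Real.cos t + r ^ 2) := by
    rw [abs_mul, abs_of_nonneg (by nlinarith : (0:ℝ) ≤ 1 - r ^ 2)]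
    have hcos1 := Real.cos_le_one t
    have hcos2 := Real.neg_one_le_cos t
    have habs2 : |8 * r ^ 2 * Real.sin t ^ 2
          - 2 * r * Real.cos t * (1 - 2 * r * Real.cos t + r ^ 2)|
        ≤ 8 * r ^ 2 * Real.sin t ^ 2 + 2 * r * (1 - 2 * r * Real.cos t + r ^ 2) := by
      rw [abs_le]
      constructor <;>
        nlinarith [mul_nonneg (mul_nonneg (by linarith : (0:ℝ) ≤ 2 * r) hDt.le)
            (by linarith : (0:ℝ) ≤ 1 - Real.cos t),
          mul_nonneg (mul_nonneg (by linarith : (0:ℝ) ≤ 2 * r) hDt.le)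
            (by linarith : (0:ℝ) ≤ 1 + Real.cos t),
          sq_nonneg (Real.sin t)]
    calc (1 - r ^ 2) * |8 * r ^ 2 * Real.sin t ^ 2
          - 2 * r * Real.cos t * (1 - 2 * r * Real.cos t + r ^ 2)|
        ≤ (1 - r ^ 2) * (8 * r ^ 2 * Real.sin t ^ 2
            + 2 * r * (1 - 2 * r * Real.cos t + r ^ 2)) :=
          mul_le_mul_of_nonneg_left habs2 (by nlinarith)
      _ ≤ 16 * (1 - r) * t ^ 2 + 4 * (1 - r) * (1 - 2 * r * Real.cos t + r ^ 2) :=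
          aux_num r (Real.sin t ^ 2) (t ^ 2) _ hr0 hr1 (sq_nonneg _) hsin hDt
  rw [abs_div, abs_of_pos (pow_pos hDt 3)]
  calc |(1 - r ^ 2) * (8 * r ^ 2 * Real.sin t ^ 2
        - 2 * r * Real.cos t * (1 - 2 * r * Real.cos t + r ^ 2))|
        / (1 - 2 * r * Real.cos t + r ^ 2) ^ 3
      ≤ (16 * (1 - r) * t ^ 2 + 4 * (1 - r) * (1 - 2 * r * Real.cos t + r ^ 2))
        / (1 - 2 * r * Real.cos t + r ^ 2) ^ 3 :=
        (div_le_div_iff_of_pos_right (pow_pos hDt 3)).mpr habs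
    _ ≤ 16 * (1 - r) * t ^ 2 / ((1 - r) ^ 2 + 4 * Real.pi⁻¹ ^ 2 * r * t ^ 2) ^ 3
        + 4 * (1 - r) / ((1 - r) ^ 2 + 4 * Real.pi⁻¹ ^ 2 * r * t ^ 2) ^ 2 :=
        aux_split _ _ _ _ (mul_nonneg (by linarith) (sq_nonneg t)) (by linarith) hQpos hQD
end

section
/- For 0 < r < 1 and 0 ≤ t ≤ π, the second t-derivative of the Poisson kernel satisfies |P_{tt}(r,t)| ≤ (1/4)(π⁶ + π⁴ r)(1-r) r^{-3} t^{-4}. -/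
set_option maxHeartbeats 1000000 in
theorem stmt_14 (r : ℝ) (hr0 : 0 < r) (hr1 : r < 1) (t : ℝ)
    (ht0 : 0 < t) (htπ : t ≤ Real.pi) :
    |deriv (deriv (fun s : ℝ =>
        (1 - r ^ 2) / (1 - 2 * r * Real.cos s + r ^ 2))) t|
      ≤ (1 / 4) * (Real.pi ^ 6 + Real.pi ^ 4 * r) * (1 - r) / (r ^ 3 * t ^ 4) := by
  have hπ := Real.pi_pos
  have hD : ∀ s : ℝ, 0 < 1 - 2 * r * Real.cos s + r ^ 2 := by
    intro s
    nlinarith [Real.cos_le_one s, sq_nonneg (1 - r)]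
  have hden : ∀ s : ℝ, HasDerivAt (fun s : ℝ => 1 - 2 * r * Real.cos s + r ^ 2)
      (2 * r * Real.sin s) s := by
    intro s
    have h := ((Real.hasDerivAt_cos s).const_mul (2 * r))
    have h2 := ((hasDerivAt_const s (1 : ℝ)).sub h).add_const (r ^ 2)
    refine h2.congr_deriv ?_
    ring
  have hd1 : deriv (fun s : ℝ => (1 - r ^ 2) / (1 - 2 * r * Real.cos s + r ^ 2))
      = fun s => -((1 - r ^ 2) * (2 * r * Real.sin s)) / (1 - 2 * r * Real.cos s + r ^ 2) ^ 2 := by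
    funext s
    have h := (hasDerivAt_const s (1 - r ^ 2)).div (hden s) (hD s).ne'
    rw [HasDerivAt.deriv (f := fun s : ℝ => (1 - r ^ 2) / (1 - 2 * r * Real.cos s + r ^ 2)) h]
    ring
  rw [hd1]
  have hnum : HasDerivAt (fun s : ℝ => -((1 - r ^ 2) * (2 * r * Real.sin s)))
      (-((1 - r ^ 2) * (2 * r * Real.cos t))) t :=
    (((Real.hasDerivAt_sin t).const_mul (2 * r)).const_mul (1 - r ^ 2)).neg
  have hden2 : HasDerivAt (fun s : ℝ => (1 - 2 * r * Real.cos s + r ^ 2) ^ 2)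
      (2 * (1 - 2 * r * Real.cos t + r ^ 2) * (2 * r * Real.sin t)) t := by
    have h := (hden t).pow 2
    refine h.congr_deriv ?_
    push_cast
    ring
  have hdiv := hnum.div hden2 (pow_ne_zero 2 (hD t).ne')
  rw [HasDerivAt.deriv (f := fun s : ℝ => -((1 - r ^ 2) * (2 * r * Real.sin s)) / (1 - 2 * r * Real.cos s + r ^ 2) ^ 2) hdiv]
  set D : ℝ := 1 - 2 * r * Real.cos t + r ^ 2 with hDdef
  have hDt : 0 < D := hD t
  have hc : 0 ≤ 1 - r ^ 2 := by nlinarith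
  have hsin2 : r * Real.sin t ^ 2 ≤ D := by
    nlinarith [Real.sin_sq_add_cos_sq t, sq_nonneg (Real.cos t - 1), sq_nonneg (1 - r)]
  have hcos1 : Real.cos t ≤ 1 := Real.cos_le_one t
  have hcos2 : -1 ≤ Real.cos t := Real.neg_one_le_cos t
  -- lower bound on D
  have hcq : Real.cos t ≤ 1 - 2 / Real.pi ^ 2 * t ^ 2 := by
    apply Real.cos_le_one_sub_mul_cos_sq
    rw [abs_of_pos ht0]; exact htπ
  have hDlow : 4 * r * t ^ 2 ≤ Real.pi ^ 2 * D := by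
    have hπ2 : 0 < Real.pi ^ 2 := by positivity
    have h1 : 2 / Real.pi ^ 2 * t ^ 2 * Real.pi ^ 2 = 2 * t ^ 2 := by
      field_simp
    nlinarith [mul_le_mul_of_nonneg_right hcq hπ2.le, sq_nonneg (1 - r)]
  -- bound the numerator
  have hnumbd : |-((1 - r ^ 2) * (2 * r * Real.cos t)) * (D ^ 2) -
      -((1 - r ^ 2) * (2 * r * Real.sin t)) * (2 * D * (2 * r * Real.sin t))|
      ≤ 10 * r * (1 - r ^ 2) * D ^ 2 := by
    have h3 := mul_le_mul_of_nonneg_left hsin2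
      (show (0:ℝ) ≤ 8 * r * (1 - r ^ 2) * D by positivity)
    have h1 : 0 ≤ 2 * r * (1 - r ^ 2) * D ^ 2 * (1 - Real.cos t) := by
      have : 0 ≤ 1 - Real.cos t := by linarith
      positivity
    have h2 : 0 ≤ 2 * r * (1 - r ^ 2) * D ^ 2 * (1 + Real.cos t) := by
      have : 0 ≤ 1 + Real.cos t := by linarith
      positivity
    have h4 : 0 ≤ 8 * r ^ 2 * (1 - r ^ 2) * Real.sin t ^ 2 * D := by positivity
    rw [abs_le]
    constructor
    · nlinarith [h1, h2, h3, h4]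
    · nlinarith [h1, h2, h3, h4]
  have habs : |(-((1 - r ^ 2) * (2 * r * Real.cos t)) * (D ^ 2) -
      -((1 - r ^ 2) * (2 * r * Real.sin t)) * (2 * D * (2 * r * Real.sin t))) / (D ^ 2) ^ 2|
      ≤ 10 * r * (1 - r ^ 2) / D ^ 2 := by
    rw [abs_div, abs_of_pos (show (0:ℝ) < (D ^ 2) ^ 2 by positivity)]
    rw [div_le_div_iff₀ (by positivity) (by positivity)]
    calc |-((1 - r ^ 2) * (2 * r * Real.cos t)) * (D ^ 2) -
        -((1 - r ^ 2) * (2 * r * Real.sin t)) * (2 * D * (2 * r * Real.sin t))| * D ^ 2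
        ≤ (10 * r * (1 - r ^ 2) * D ^ 2) * D ^ 2 := by
          apply mul_le_mul_of_nonneg_right hnumbd (by positivity)
      _ = 10 * r * (1 - r ^ 2) * (D ^ 2) ^ 2 := by ring
  refine habs.trans ?_
  -- final comparison
  have h16 : 16 * r ^ 2 * t ^ 4 ≤ Real.pi ^ 4 * D ^ 2 := by
    nlinarith [hDlow, mul_pos hr0 (mul_pos ht0 ht0), sq_nonneg t,
      mul_pos (mul_pos hr0 hr0) (mul_pos (mul_pos ht0 ht0) (mul_pos ht0 ht0))]
  rw [div_le_div_iff₀ (by positivity) (by positivity)]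
  have hπ2 : 9 ≤ Real.pi ^ 2 := by nlinarith [Real.pi_gt_three]
  have hkey := mul_le_mul_of_nonneg_left h16
    (show (0:ℝ) ≤ (1 / 4) * (Real.pi ^ 2 + r) * (1 - r) by nlinarith [sq_nonneg Real.pi])
  have h5 : 10 * r ^ 2 * (1 + r) ≤ 4 * (Real.pi ^ 2 + r) := by nlinarith [hπ2]
  have h6 := mul_le_mul_of_nonneg_right h5
    (show (0:ℝ) ≤ (1 - r) * r ^ 2 * t ^ 4 by
      have h := mul_pos (pow_pos hr0 2) (pow_pos ht0 4); nlinarith)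
  nlinarith [hkey, h6]
end

section
/- For 0 < r < 1 and all real t, the second t-derivative of the Poisson kernel satisfies |P_{tt}(r,t)| ≤ ((4π²r² + 12r³)/(3r³)) (1-r)^{-3}. -/
set_option maxHeartbeats 1000000 in
private lemma poisson_poly_bound (r c sn D : ℝ) (hr0 : 0 < r) (hr1 : r < 1)
    (hc1 : c ≤ 1) (hc2 : -1 ≤ c) (hs2 : sn ^ 2 = 1 - c ^ 2)
    (hDdef : D = 1 - 2 * r * c + r ^ 2) :
    |(1 - r ^ 2) * (8 * r ^ 2 * sn ^ 2 - 2 * r * c * D)| * (1 - r) ^ 3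
      ≤ (12 + 4 * r) * D ^ 3 := by
  have hx : 0 < 1 - r := by linarith
  have hr2 : 0 < 1 - r ^ 2 := by nlinarith
  have hDpos : 0 < D := by nlinarith [sq_nonneg (1 - r)]
  have hDx2 : (1 - r) ^ 2 ≤ D := by nlinarith
  have hx4D2 : (1 - r) ^ 4 ≤ D ^ 2 := by nlinarith [sq_nonneg (1 - r)]
  rcases abs_cases ((1 - r ^ 2) * (8 * r ^ 2 * sn ^ 2 - 2 * r * c * D)) with
    ⟨he, _⟩ | ⟨he, _⟩ <;> rw [he]
  · rcases le_or_gt 0 c with hcs | hcs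
    · -- 0 ≤ c : use 8 r² sn² ≤ 8 r D
      have h8 : 8 * r ^ 2 * sn ^ 2 ≤ 8 * r * D := by
        nlinarith [mul_nonneg hr0.le (sq_nonneg (1 - c))]
      have hnum : (1 - r ^ 2) * (8 * r ^ 2 * sn ^ 2 - 2 * r * c * D)
          ≤ (1 - r ^ 2) * (8 * r * D) := by
        have h1 : 0 ≤ (1 - r ^ 2) * (8 * r * D - 8 * r ^ 2 * sn ^ 2) :=
          mul_nonneg hr2.le (by linarith)
        have h2 : 0 ≤ (1 - r ^ 2) * (2 * r * c * D) :=
          mul_nonneg hr2.le (mul_nonneg (mul_nonneg (by linarith) hcs) hDpos.le)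
        nlinarith [h1, h2]
      calc (1 - r ^ 2) * (8 * r ^ 2 * sn ^ 2 - 2 * r * c * D) * (1 - r) ^ 3
          ≤ (1 - r ^ 2) * (8 * r * D) * (1 - r) ^ 3 :=
            mul_le_mul_of_nonneg_right hnum (by positivity)
        _ = (8 * r * (1 + r)) * ((1 - r) ^ 4 * D) := by ring
        _ ≤ (12 + 4 * r) * (D ^ 2 * D) := by
            have ha : 0 ≤ 8 * r * (1 + r) := by nlinarith
            have hb : 8 * r * (1 + r) ≤ 12 + 4 * r := by nlinarith
            have hcd : (1 - r) ^ 4 * D ≤ D ^ 2 * D :=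
              mul_le_mul_of_nonneg_right hx4D2 hDpos.le
            exact mul_le_mul hb hcd (by positivity) (by linarith)
        _ = (12 + 4 * r) * D ^ 3 := by ring
    · -- c < 0 : D ≥ 1, crude bound
      have hD1 : 1 ≤ D := by nlinarith [mul_nonneg hr0.le (neg_nonneg.mpr hcs.le)]
      have hsn1 : sn ^ 2 ≤ 1 := by nlinarith [sq_nonneg c]
      have hA : 8 * r ^ 2 * sn ^ 2 ≤ 8 * r ^ 2 * D := by
        have := mul_nonneg (by positivity : (0:ℝ) ≤ 8 * r ^ 2)
          (by linarith : (0:ℝ) ≤ D - sn ^ 2)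
        nlinarith [this]
      have hB : -(2 * r * c * D) ≤ 2 * r * D := by
        have := mul_nonneg (mul_nonneg (by positivity : (0:ℝ) ≤ 2 * r) hDpos.le)
          (by linarith : (0:ℝ) ≤ 1 + c)
        nlinarith [this]
      have hX : 0 ≤ 8 * r ^ 2 * sn ^ 2 - 2 * r * c * D := by
        by_contra h
        push_neg at h
        nlinarith [mul_pos hr2 (neg_pos.mpr h)]
      have hnum : (1 - r ^ 2) * (8 * r ^ 2 * sn ^ 2 - 2 * r * c * D)
          ≤ (8 * r ^ 2 + 2 * r) * D := by
        have h5 : (1 - r ^ 2) * (8 * r ^ 2 * sn ^ 2 - 2 * r * c * D)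
            ≤ 8 * r ^ 2 * sn ^ 2 - 2 * r * c * D := by
          nlinarith [mul_nonneg (sq_nonneg r) hX]
        linarith [hA, hB]
      calc (1 - r ^ 2) * (8 * r ^ 2 * sn ^ 2 - 2 * r * c * D) * (1 - r) ^ 3
          ≤ ((8 * r ^ 2 + 2 * r) * D) * (1 - r) ^ 3 :=
            mul_le_mul_of_nonneg_right hnum (by positivity)
        _ = ((8 * r ^ 2 + 2 * r) * (1 - r) ^ 3) * D := by ring
        _ ≤ (12 + 4 * r) * D ^ 3 := by
            have hp3 : (1 - r) ^ 3 ≤ 1 := by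
              have : 1 - r ≤ 1 := by linarith
              exact pow_le_one₀ hx.le this
            have h3 : (8 * r ^ 2 + 2 * r) * (1 - r) ^ 3 ≤ 12 + 4 * r := by
              have h10 : 8 * r ^ 2 + 2 * r ≤ 10 := by nlinarith
              have := mul_le_mul h10 hp3 (by positivity) (by norm_num)
              linarith
            have h4 : D ≤ D ^ 3 := by
              have hD2 : (1:ℝ) ≤ D ^ 2 := by nlinarith
              nlinarith [mul_nonneg hDpos.le (by linarith : (0:ℝ) ≤ D ^ 2 - 1)]
            exact mul_le_mul h3 h4 hDpos.le (by linarith)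
  · -- negative part : -num ≤ (1-r²) 2 r D
    have hnum : -((1 - r ^ 2) * (8 * r ^ 2 * sn ^ 2 - 2 * r * c * D))
        ≤ (1 - r ^ 2) * (2 * r * D) := by
      have h1 : 2 * r * c * D ≤ 2 * r * D := by
        nlinarith [mul_pos hr0 hDpos]
      have h2 : 0 ≤ 8 * r ^ 2 * sn ^ 2 := by positivity
      nlinarith [mul_nonneg hr2.le h2, mul_nonneg hr2.le
        (sub_nonneg.mpr h1)]
    calc -((1 - r ^ 2) * (8 * r ^ 2 * sn ^ 2 - 2 * r * c * D)) * (1 - r) ^ 3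
        ≤ (1 - r ^ 2) * (2 * r * D) * (1 - r) ^ 3 :=
          mul_le_mul_of_nonneg_right hnum (by positivity)
      _ = (2 * r * (1 + r)) * ((1 - r) ^ 4 * D) := by ring
      _ ≤ (12 + 4 * r) * (D ^ 2 * D) := by
          have hb : 2 * r * (1 + r) ≤ 12 + 4 * r := by nlinarith
          have hcd : (1 - r) ^ 4 * D ≤ D ^ 2 * D :=
            mul_le_mul_of_nonneg_right hx4D2 hDpos.le
          exact mul_le_mul hb hcd (by positivity) (by linarith)
      _ = (12 + 4 * r) * D ^ 3 := by ring

theorem stmt_15 (r : ℝ) (hr0 : 0 < r) (hr1 : r < 1) (t : ℝ) :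
    |deriv (deriv (fun s : ℝ =>
        (1 - r ^ 2) / (1 - 2 * r * Real.cos s + r ^ 2))) t|
      ≤ ((4 * Real.pi ^ 2 * r ^ 2 + 12 * r ^ 3) / (3 * r ^ 3)) / (1 - r) ^ 3 := by
  have hDpos : ∀ s : ℝ, 0 < 1 - 2 * r * Real.cos s + r ^ 2 := by
    intro s
    nlinarith [Real.cos_le_one s, Real.neg_one_le_cos s, sq_nonneg (1 - r)]
  have hDd : ∀ s : ℝ, HasDerivAt (fun s : ℝ => 1 - 2 * r * Real.cos s + r ^ 2)
      (2 * r * Real.sin s) s := by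
    intro s
    have h := (((Real.hasDerivAt_cos s).const_mul (2 * r)).const_sub 1).add_const (r ^ 2)
    exact h.congr_deriv (by ring)
  have h1 : deriv (fun s : ℝ => (1 - r ^ 2) / (1 - 2 * r * Real.cos s + r ^ 2))
      = fun s => -((1 - r ^ 2) * (2 * r * Real.sin s)) /
          (1 - 2 * r * Real.cos s + r ^ 2) ^ 2 := by
    funext s
    have h := (hasDerivAt_const s (1 - r ^ 2)).div (hDd s) (ne_of_gt (hDpos s))
    rw [show deriv (fun s : ℝ => (1 - r ^ 2) / (1 - 2 * r * Real.cos s + r ^ 2)) s = _ from h.deriv]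
    ring
  rw [h1]
  have hDt : 0 < 1 - 2 * r * Real.cos t + r ^ 2 := hDpos t
  have h2 : HasDerivAt (fun s => -((1 - r ^ 2) * (2 * r * Real.sin s)) /
      (1 - 2 * r * Real.cos s + r ^ 2) ^ 2)
      ((-((1 - r ^ 2) * (2 * r * Real.cos t)) * ((1 - 2 * r * Real.cos t + r ^ 2) ^ 2) -
        (-((1 - r ^ 2) * (2 * r * Real.sin t))) *
          (2 * (1 - 2 * r * Real.cos t + r ^ 2) ^ 1 * (2 * r * Real.sin t))) /
        ((1 - 2 * r * Real.cos t + r ^ 2) ^ 2) ^ 2) t := by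
    have hnum : HasDerivAt (fun s : ℝ => -((1 - r ^ 2) * (2 * r * Real.sin s)))
        (-((1 - r ^ 2) * (2 * r * Real.cos t))) t := by
      have h := (((Real.hasDerivAt_sin t).const_mul (2 * r)).const_mul (1 - r ^ 2)).neg
      exact h.congr_deriv (by ring)
    have hden : HasDerivAt (fun s : ℝ => (1 - 2 * r * Real.cos s + r ^ 2) ^ 2)
        (2 * (1 - 2 * r * Real.cos t + r ^ 2) ^ 1 * (2 * r * Real.sin t)) t := by
      have h := (hDd t).pow 2
      exact h.congr_deriv (by push_cast; ring)
    exact hnum.div hden (by positivity)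
  rw [h2.deriv]
  have key : (-((1 - r ^ 2) * (2 * r * Real.cos t)) * ((1 - 2 * r * Real.cos t + r ^ 2) ^ 2) -
        (-((1 - r ^ 2) * (2 * r * Real.sin t))) *
          (2 * (1 - 2 * r * Real.cos t + r ^ 2) ^ 1 * (2 * r * Real.sin t))) /
        ((1 - 2 * r * Real.cos t + r ^ 2) ^ 2) ^ 2
      = (1 - r ^ 2) * (8 * r ^ 2 * Real.sin t ^ 2 -
          2 * r * Real.cos t * (1 - 2 * r * Real.cos t + r ^ 2)) /
        (1 - 2 * r * Real.cos t + r ^ 2) ^ 3 := by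
    field_simp
    ring
  rw [key]
  have hx : (0:ℝ) < 1 - r := by linarith
  have hbound := poisson_poly_bound r (Real.cos t) (Real.sin t)
    (1 - 2 * r * Real.cos t + r ^ 2) hr0 hr1 (Real.cos_le_one t)
    (Real.neg_one_le_cos t) (Real.sin_sq t) rfl
  have hstep : |(1 - r ^ 2) * (8 * r ^ 2 * Real.sin t ^ 2 -
          2 * r * Real.cos t * (1 - 2 * r * Real.cos t + r ^ 2)) /
        (1 - 2 * r * Real.cos t + r ^ 2) ^ 3| ≤ (12 + 4 * r) / (1 - r) ^ 3 := by
    rw [abs_div, abs_of_pos (pow_pos hDt 3),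
      div_le_div_iff₀ (pow_pos hDt 3) (pow_pos hx 3)]
    calc |(1 - r ^ 2) * (8 * r ^ 2 * Real.sin t ^ 2 -
          2 * r * Real.cos t * (1 - 2 * r * Real.cos t + r ^ 2))| * (1 - r) ^ 3
        ≤ (12 + 4 * r) * (1 - 2 * r * Real.cos t + r ^ 2) ^ 3 := hbound
      _ = (12 + 4 * r) * (1 - 2 * r * Real.cos t + r ^ 2) ^ 3 := rfl
  refine hstep.trans ?_
  have hpi : (3 : ℝ) < Real.pi := Real.pi_gt_three
  have h9 : (9:ℝ) ≤ Real.pi ^ 2 := by nlinarith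
  rw [div_le_div_iff₀ (pow_pos hx 3) (pow_pos hx 3)]
  have hK : 12 + 4 * r ≤ (4 * Real.pi ^ 2 * r ^ 2 + 12 * r ^ 3) / (3 * r ^ 3) := by
    rw [le_div_iff₀ (by positivity)]
    nlinarith [pow_pos hr0 3, mul_pos hr0 hr0, mul_pos (mul_pos hr0 hr0) hr0,
      mul_le_mul_of_nonneg_right h9 (mul_pos hr0 hr0).le]
  nlinarith [pow_pos hx 3, mul_le_mul_of_nonneg_right hK (pow_pos hx 3).le]
end

section
/- Let 1 < p ≤ 2 and let f, g be elements of L^p(μ) for a measure μ. Then ‖(f+g)/2‖² + (p-1)‖(f-g)/2‖² ≤ (‖f‖² + ‖g‖²)/2, where ‖·‖ denotes the L^p norm. -/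
open MeasureTheory

open Real Set ENNReal



-- core derivative inequality: (1+s)^q - (1-s)^q ≥ 2qs on [0,1], 0<q≤1
lemma bcl_aux1 {q : ℝ} (hq0 : 0 < q) (hq1 : q ≤ 1) {s : ℝ} (hs0 : 0 ≤ s) (hs1 : s ≤ 1) :
    2 * q * s ≤ (1 + s) ^ q - (1 - s) ^ q := by
  set g : ℝ → ℝ := fun t => (1 + t) ^ q - (1 - t) ^ q - 2 * q * t with hg
  have key : ∀ x ∈ Ioo (0:ℝ) 1,
      HasDerivAt g (q * (1 + x) ^ (q - 1) + q * (1 - x) ^ (q - 1) - 2 * q) x := by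
    intro x hx
    have h1 : (0:ℝ) < 1 + x := by linarith [hx.1]
    have h2 : (0:ℝ) < 1 - x := by linarith [hx.2]
    have d1 : HasDerivAt (fun t : ℝ => (1 + t) ^ q) (q * (1 + x) ^ (q - 1)) x := by
      have := ((hasDerivAt_id x).const_add (1:ℝ)).rpow_const (p := q) (Or.inl h1.ne')
      simpa using this
    have d2 : HasDerivAt (fun t : ℝ => (1 - t) ^ q) (-(q * (1 - x) ^ (q - 1))) x := by
      have h := ((hasDerivAt_id x).const_sub (1:ℝ)).rpow_const (p := q) (Or.inl h2.ne')
      convert h using 1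
      simp
      show _ = -1 * q * (1 - x) ^ (q - 1); ring
    have := (d1.sub d2).sub ((hasDerivAt_id x).const_mul (2 * q))
    exact this.congr_deriv (by ring)
  have hmono : MonotoneOn g (Icc (0:ℝ) 1) := by
    have hcont : ContinuousOn g (Icc 0 1) := by
      apply ContinuousOn.sub
      apply ContinuousOn.sub
      · exact (continuousOn_const.add continuousOn_id).rpow_const (fun x hx => Or.inr hq0.le)
      · exact (continuousOn_const.sub continuousOn_id).rpow_const (fun x hx => Or.inr hq0.le)
      · exact (continuous_const.mul continuous_id).continuousOn
    apply monotoneOn_of_deriv_nonneg (convex_Icc 0 1) hcont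
    · intro x hx
      rw [interior_Icc] at hx
      exact (key x hx).differentiableAt.differentiableWithinAt
    · intro x hx
      rw [interior_Icc] at hx
      rw [(key x hx).deriv]
      have h1 : (0:ℝ) < 1 + x := by linarith [hx.1]
      have h2 : (0:ℝ) < 1 - x := by linarith [hx.2]
      set A := (1 + x) ^ (q - 1) with hA
      set B := (1 - x) ^ (q - 1) with hB
      have hApos : 0 < A := rpow_pos_of_pos h1 _
      have hBpos : 0 < B := rpow_pos_of_pos h2 _
      have hprod : 1 ≤ A * B := by
        rw [hA, hB, ← Real.mul_rpow h1.le h2.le]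
        have hb : 0 < (1 + x) * (1 - x) := mul_pos h1 h2
        have hb1 : (1 + x) * (1 - x) ≤ 1 := by nlinarith [sq_nonneg x]
        exact Real.one_le_rpow_of_pos_of_le_one_of_nonpos hb hb1 (by linarith)
      have hsum : 2 ≤ A + B := by nlinarith [sq_nonneg (A - B), mul_pos hApos hBpos]
      nlinarith
  have h0 : g 0 ≤ g s := hmono (by constructor <;> norm_num) ⟨hs0, hs1⟩ hs0
  have : g 0 = 0 := by simp [hg]
  simp only [hg] at h0 this
  linarith

-- second layer: (1+r)^p + (1-r)^p ≥ 2 + p(p-1)r² on [0,1], 1<p≤2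
lemma bcl_aux2 {p : ℝ} (hp1 : 1 < p) (hp2 : p ≤ 2) {r : ℝ} (hr0 : 0 ≤ r) (hr1 : r ≤ 1) :
    2 + p * (p - 1) * r ^ 2 ≤ (1 + r) ^ p + (1 - r) ^ p := by
  set g : ℝ → ℝ := fun t => (1 + t) ^ p + (1 - t) ^ p - 2 * p * (p-1) * (t^2/2) with hg
  have key : ∀ x ∈ Ioo (0:ℝ) 1,
      HasDerivAt g (p * (1 + x) ^ (p - 1) - p * (1 - x) ^ (p - 1) - 2 * p * (p-1) * x) x := by
    intro x hx
    have h1 : (0:ℝ) < 1 + x := by linarith [hx.1]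
    have h2 : (0:ℝ) < 1 - x := by linarith [hx.2]
    have d1 : HasDerivAt (fun t : ℝ => (1 + t) ^ p) (p * (1 + x) ^ (p - 1)) x := by
      have := ((hasDerivAt_id x).const_add (1:ℝ)).rpow_const (p := p) (Or.inl h1.ne')
      simpa using this
    have d2 : HasDerivAt (fun t : ℝ => (1 - t) ^ p) (-(p * (1 - x) ^ (p - 1))) x := by
      have h := ((hasDerivAt_id x).const_sub (1:ℝ)).rpow_const (p := p) (Or.inl h2.ne')
      convert h using 1
      simp
      show _ = -1 * p * (1 - x) ^ (p - 1); ring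
    have d3 : HasDerivAt (fun t : ℝ => t^2/2) x x := by
      have := (hasDerivAt_pow 2 x).div_const 2
      simpa using this
    have := (d1.add d2).sub ((d3.const_mul (2 * p * (p-1))))
    exact this.congr_deriv (by ring)
  have hmono : MonotoneOn g (Icc (0:ℝ) 1) := by
    have hcont : ContinuousOn g (Icc 0 1) := by
      apply ContinuousOn.sub
      apply ContinuousOn.add
      · exact (continuousOn_const.add continuousOn_id).rpow_const
          (fun x hx => Or.inr (by linarith))
      · exact (continuousOn_const.sub continuousOn_id).rpow_const
          (fun x hx => Or.inr (by linarith))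
      · exact (continuous_const.mul ((continuous_pow 2).div_const 2)).continuousOn
    apply monotoneOn_of_deriv_nonneg (convex_Icc 0 1) hcont
    · intro x hx
      rw [interior_Icc] at hx
      exact (key x hx).differentiableAt.differentiableWithinAt
    · intro x hx
      rw [interior_Icc] at hx
      rw [(key x hx).deriv]
      have h := bcl_aux1 (q := p - 1) (by linarith) (by linarith) hx.1.le hx.2.le
      have hp0 : 0 < p := by linarith
      have : 2 * (p-1) * x ≤ (1 + x) ^ (p-1) - (1 - x) ^ (p-1) := h
      nlinarith
  have h0 : g 0 ≤ g r := hmono (by constructor <;> norm_num) ⟨hr0, hr1⟩ hr0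
  have hz : g 0 = 2 := by norm_num [hg]
  simp only [hg] at h0 hz
  rw [hz] at h0
  linarith

-- third: (1+(p-1)r²)^{p/2} ≤ ((1+r)^p + (1-r)^p)/2 on [0,1]
lemma bcl_aux3 {p : ℝ} (hp1 : 1 < p) (hp2 : p ≤ 2) {r : ℝ} (hr0 : 0 ≤ r) (hr1 : r ≤ 1) :
    (1 + (p - 1) * r ^ 2) ^ (p / 2) ≤ ((1 + r) ^ p + (1 - r) ^ p) / 2 := by
  have hb : (1 + (p - 1) * r ^ 2) ^ (p / 2) ≤ 1 + (p / 2) * ((p - 1) * r ^ 2) := by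
    apply rpow_one_add_le_one_add_mul_self
    · nlinarith
    · linarith
    · linarith
  have := bcl_aux2 hp1 hp2 hr0 hr1
  linarith



-- homogeneous, 0 ≤ b ≤ a
lemma bcl_aux4 {p : ℝ} (hp1 : 1 < p) (hp2 : p ≤ 2) {a b : ℝ} (hb : 0 ≤ b) (hba : b ≤ a) :
    (a ^ 2 + (p - 1) * b ^ 2) ^ (p / 2) ≤ ((a + b) ^ p + (a - b) ^ p) / 2 := by
  rcases eq_or_lt_of_le (hb.trans hba) with h | ha
  · have ha0 : a = 0 := h.symm
    have hb0 : b = 0 := le_antisymm (ha0 ▸ hba) hb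
    subst ha0; subst hb0
    norm_num
    rw [Real.zero_rpow (by positivity)]
    positivity
  · set r := b / a with hr
    have hr0 : 0 ≤ r := div_nonneg hb ha.le
    have hr1 : r ≤ 1 := (div_le_one ha).mpr hba
    have key := bcl_aux3 hp1 hp2 hr0 hr1
    have hmul := mul_le_mul_of_nonneg_left key (le_of_lt (rpow_pos_of_pos ha p))
    have hap : a ^ p = (a ^ 2) ^ (p / 2) := by
      rw [← Real.rpow_natCast a 2, ← Real.rpow_mul ha.le]
      push_cast
      rw [show (2:ℝ) * (p/2) = p by ring]
    have e0 : a ^ p * (1 + (p - 1) * r ^ 2) ^ (p / 2) = (a ^ 2 + (p - 1) * b ^ 2) ^ (p / 2) := by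
      rw [hap, ← Real.mul_rpow (by positivity) (by nlinarith)]
      congr 1
      rw [hr]; field_simp
    have e1 : a ^ p * (1 + r) ^ p = (a + b) ^ p := by
      rw [← Real.mul_rpow ha.le (by linarith)]
      congr 1
      rw [hr]; field_simp
    have e2 : a ^ p * (1 - r) ^ p = (a - b) ^ p := by
      rw [← Real.mul_rpow ha.le (by linarith)]
      congr 1
      rw [hr]; field_simp
    have e3 : a ^ p * (((1 + r) ^ p + (1 - r) ^ p) / 2)
        = (a ^ p * (1 + r) ^ p + a ^ p * (1 - r) ^ p) / 2 := by ring
    rw [e0, e3, e1, e2] at hmul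
    exact hmul

-- all nonneg a b
lemma bcl_aux5 {p : ℝ} (hp1 : 1 < p) (hp2 : p ≤ 2) {a b : ℝ} (ha : 0 ≤ a) (hb : 0 ≤ b) :
    (a ^ 2 + (p - 1) * b ^ 2) ^ (p / 2) ≤ ((a + b) ^ p + |a - b| ^ p) / 2 := by
  rcases le_total b a with h | h
  · rw [abs_of_nonneg (by linarith)]
    exact bcl_aux4 hp1 hp2 hb h
  · rw [abs_of_nonpos (by linarith)]
    have key := bcl_aux4 hp1 hp2 ha h
    have hmono : (a ^ 2 + (p - 1) * b ^ 2) ^ (p / 2) ≤ (b ^ 2 + (p - 1) * a ^ 2) ^ (p / 2) := by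
      apply Real.rpow_le_rpow (by nlinarith) (by nlinarith [mul_nonneg (by nlinarith : (0:ℝ) ≤ b^2 - a^2) (by linarith : (0:ℝ) ≤ 2 - p)]) (by linarith)
    calc (a ^ 2 + (p - 1) * b ^ 2) ^ (p / 2) ≤ (b ^ 2 + (p - 1) * a ^ 2) ^ (p / 2) := hmono
      _ ≤ ((b + a) ^ p + (b - a) ^ p) / 2 := key
      _ = ((a + b) ^ p + (-(a - b)) ^ p) / 2 := by rw [add_comm b a]; ring_nf
    
-- difference antitone
lemma bcl_aux6 {c : ℝ} (hc0 : 0 < c) (hc1 : c ≤ 1) {δ A B : ℝ} (hδ : 0 ≤ δ)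
    (hB : 0 ≤ B) (hBA : B ≤ A) :
    (A + δ) ^ c - A ^ c ≤ (B + δ) ^ c - B ^ c := by
  have hA : 0 ≤ A := hB.trans hBA
  set g : ℝ → ℝ := fun t => (t + δ) ^ c - t ^ c with hg
  have hanti : AntitoneOn g (Ici (0:ℝ)) := by
    have hcont : ContinuousOn g (Ici 0) := by
      apply ContinuousOn.sub
      · exact (continuousOn_id.add continuousOn_const).rpow_const (fun x hx => Or.inr hc0.le)
      · exact continuousOn_id.rpow_const (fun x hx => Or.inr hc0.le)
    apply antitoneOn_of_deriv_nonpos (convex_Ici 0) hcont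
    · intro x hx
      rw [interior_Ici] at hx
      have h1 : (0:ℝ) < x := hx
      have d1 : HasDerivAt (fun t : ℝ => (t + δ) ^ c) (c * (x + δ) ^ (c - 1)) x := by
        have := ((hasDerivAt_id x).add_const δ).rpow_const (p := c) (Or.inl (by positivity))
        simpa using this
      have d2 : HasDerivAt (fun t : ℝ => t ^ c) (c * x ^ (c - 1)) x := by
        have := (hasDerivAt_id x).rpow_const (p := c) (Or.inl h1.ne')
        simpa using this
      exact (d1.sub d2).differentiableAt.differentiableWithinAt
    · intro x hx
      rw [interior_Ici] at hx
      have h1 : (0:ℝ) < x := hx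
      have d1 : HasDerivAt (fun t : ℝ => (t + δ) ^ c) (c * (x + δ) ^ (c - 1)) x := by
        have := ((hasDerivAt_id x).add_const δ).rpow_const (p := c) (Or.inl (by positivity))
        simpa using this
      have d2 : HasDerivAt (fun t : ℝ => t ^ c) (c * x ^ (c - 1)) x := by
        have := (hasDerivAt_id x).rpow_const (p := c) (Or.inl h1.ne')
        simpa using this
      have hd : deriv g x = _ := (d1.sub d2).deriv
      rw [hd]
      have : (x + δ) ^ (c - 1) ≤ x ^ (c - 1) :=
        Real.rpow_le_rpow_of_nonpos h1 (by linarith) (by linarith)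
      nlinarith
  have := hanti (mem_Ici.mpr hB) (mem_Ici.mpr hA) hBA
  simpa [hg] using this

-- majorization
lemma bcl_aux7 {c : ℝ} (hc0 : 0 < c) (hc1 : c ≤ 1) {A B A' B' : ℝ}
    (hB' : 0 ≤ B') (h1 : B' ≤ B) (h2 : B ≤ A) (h3 : A ≤ A') (hsum : A + B = A' + B') :
    A' ^ c + B' ^ c ≤ A ^ c + B ^ c := by
  have hδ : A' = A + (B - B') := by linarith
  have := bcl_aux6 hc0 hc1 (δ := B - B') (A := A) (B := B') (by linarith) hB' (by linarith)
  have hBB : B' + (B - B') = B := by ring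
  rw [hBB] at this
  rw [hδ]
  linarith



-- pair comparison from sum equality and product inequality
lemma bcl_pairs {c : ℝ} (hc0 : 0 < c) (hc1 : c ≤ 1) {A B A' B' : ℝ}
    (hB : 0 ≤ B) (hB' : 0 ≤ B') (hBA : B ≤ A) (hB'A' : B' ≤ A')
    (hsum : A + B = A' + B') (hprod : A' * B' ≤ A * B) :
    A' ^ c + B' ^ c ≤ A ^ c + B ^ c := by
  by_cases h : B' ≤ B
  · exact bcl_aux7 hc0 hc1 hB' h hBA (by linarith) hsum
  · push_neg at h
    have key : (B - B') * (A' - B) = A * B - A' * B' := by nlinarith [hsum]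
    have hA'B : A' ≤ B := by nlinarith
    have := bcl_aux7 hc0 hc1 (A := A) (B := B) (A' := B') (B' := A')
      (by linarith [hB'A', hA'B, hB]) hA'B hBA (by linarith) (by linarith)
    linarith

lemma sq_rpow_half {x p : ℝ} (hx : 0 ≤ x) : (x ^ 2) ^ (p / 2) = x ^ p := by
  rw [← Real.rpow_natCast x 2, ← Real.rpow_mul hx]
  push_cast
  rw [show (2:ℝ) * (p/2) = p by ring]

lemma bcl_complex {p : ℝ} (hp1 : 1 < p) (hp2 : p ≤ 2) (z w : ℂ) :
    (‖z‖ ^ 2 + (p - 1) * ‖w‖ ^ 2) ^ (p / 2) ≤ (‖z + w‖ ^ p + ‖z - w‖ ^ p) / 2 := by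
  have hc0 : 0 < p / 2 := by linarith
  have hc1 : p / 2 ≤ 1 := by linarith
  set a := ‖z‖ with hadef
  set b := ‖w‖ with hbdef
  have ha : 0 ≤ a := norm_nonneg z
  have hb : 0 ≤ b := norm_nonneg w
  have hA : 0 ≤ ‖z + w‖ ^ 2 := by positivity
  have hB : 0 ≤ ‖z - w‖ ^ 2 := by positivity
  have hsum : ‖z + w‖ ^ 2 + ‖z - w‖ ^ 2 = (a + b) ^ 2 + (a - b) ^ 2 := by
    have := parallelogram_law_with_norm ℂ z w
    nlinarith [this]
  have hprod : (a + b) ^ 2 * (a - b) ^ 2 ≤ ‖z + w‖ ^ 2 * ‖z - w‖ ^ 2 := by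
    have h1 : |‖z * z‖ - ‖w * w‖| ≤ ‖z * z - w * w‖ := abs_norm_sub_norm_le _ _
    have h2 : (z + w) * (z - w) = z * z - w * w := by ring
    have h3 : ‖z + w‖ * ‖z - w‖ = ‖z * z - w * w‖ := by rw [← norm_mul, h2]
    have h4 : ‖z * z‖ = a ^ 2 := by rw [norm_mul]; ring
    have h5 : ‖w * w‖ = b ^ 2 := by rw [norm_mul]; ring
    have h6 : |a ^ 2 - b ^ 2| ≤ ‖z + w‖ * ‖z - w‖ := by rw [h3]; rw [h4, h5] at h1; exact h1
    calc (a + b) ^ 2 * (a - b) ^ 2 = |a ^ 2 - b ^ 2| ^ 2 := by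
          rw [sq_abs]; ring
      _ ≤ (‖z + w‖ * ‖z - w‖) ^ 2 := by
          apply sq_le_sq' <;> nlinarith [abs_nonneg (a^2 - b^2), norm_nonneg (z+w), norm_nonneg (z-w)]
      _ = ‖z + w‖ ^ 2 * ‖z - w‖ ^ 2 := by ring
  have hB'A' : (a - b) ^ 2 ≤ (a + b) ^ 2 := by nlinarith
  have step1 := bcl_aux5 hp1 hp2 ha hb
  have step2 : ((a + b) ^ 2) ^ (p/2) + ((a - b) ^ 2) ^ (p/2)
      ≤ (‖z + w‖ ^ 2) ^ (p/2) + (‖z - w‖ ^ 2) ^ (p/2) := by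
    rcases le_total (‖z - w‖ ^ 2) (‖z + w‖ ^ 2) with hcase | hcase
    · exact bcl_pairs hc0 hc1 hB (by positivity) hcase hB'A' hsum hprod
    · have := bcl_pairs hc0 hc1 hA (by positivity) hcase hB'A'
        (by linarith [hsum]) (by linarith [hprod])
      linarith
  rw [sq_rpow_half (by linarith : (0:ℝ) ≤ a + b)] at step2
  have habs : ((a - b) ^ 2) ^ (p/2) = |a - b| ^ p := by
    rw [← sq_abs, sq_rpow_half (abs_nonneg _)]
  rw [habs, sq_rpow_half (norm_nonneg (z+w)), sq_rpow_half (norm_nonneg (z-w))] at step2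
  linarith


-- pointwise weighted concavity inequality, real version
lemma ptwise_real {c lam : ℝ} (hc0 : 0 < c) (hc1 : c ≤ 1) (hl0 : 0 < lam) (hl1 : lam < 1)
    {s t : ℝ} (hs : 0 ≤ s) (ht : 0 ≤ t) :
    lam ^ (1 - c) * s ^ c + (1 - lam) ^ (1 - c) * t ^ c ≤ (s + t) ^ c := by
  rcases eq_or_lt_of_le (add_nonneg hs ht) with h | hst
  · have hs0 : s = 0 := by linarith [ht, hs]
    have ht0 : t = 0 := by linarith [hs, ht]
    subst hs0; subst ht0
    rw [Real.zero_rpow hc0.ne']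
    norm_num
    positivity
  · set S := s + t with hS
    have hα : s / S + t / S = 1 := by field_simp; exact hS.symm
    have g1 : lam ^ (1 - c) * (s / S) ^ c ≤ (1 - c) * lam + c * (s / S) := by
      have := Real.geom_mean_le_arith_mean2_weighted (by linarith : (0:ℝ) ≤ 1 - c)
        hc0.le hl0.le (by positivity : (0:ℝ) ≤ s / S) (by ring)
      exact this
    have g2 : (1 - lam) ^ (1 - c) * (t / S) ^ c ≤ (1 - c) * (1 - lam) + c * (t / S) := by
      have := Real.geom_mean_le_arith_mean2_weighted (by linarith : (0:ℝ) ≤ 1 - c)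
        hc0.le (by linarith : (0:ℝ) ≤ 1 - lam) (by positivity : (0:ℝ) ≤ t / S) (by ring)
      exact this
    have hdiv : (s / S) ^ c = s ^ c / S ^ c := Real.div_rpow hs hst.le c
    have hdivt : (t / S) ^ c = t ^ c / S ^ c := Real.div_rpow ht hst.le c
    rw [hdiv] at g1
    rw [hdivt] at g2
    have hSc : 0 < S ^ c := rpow_pos_of_pos hst _
    have hsum : lam ^ (1 - c) * (s ^ c / S ^ c) + (1 - lam) ^ (1 - c) * (t ^ c / S ^ c) ≤ 1 := by
      have : (1 - c) * lam + c * (s / S) + ((1 - c) * (1 - lam) + c * (t / S)) = 1 := by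
        field_simp
        ring
      linarith
    calc lam ^ (1 - c) * s ^ c + (1 - lam) ^ (1 - c) * t ^ c
        = (lam ^ (1 - c) * (s ^ c / S ^ c) + (1 - lam) ^ (1 - c) * (t ^ c / S ^ c)) * S ^ c := by
          field_simp
      _ ≤ 1 * S ^ c := by
          apply mul_le_mul_of_nonneg_right hsum hSc.le
      _ = S ^ c := one_mul _

-- pointwise, ENNReal version
lemma ptwise_ennreal {c lam : ℝ} (hc0 : 0 < c) (hc1 : c ≤ 1) (hl0 : 0 < lam) (hl1 : lam < 1)
    (a b : ℝ≥0∞) :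
    ENNReal.ofReal (lam ^ (1 - c)) * a ^ c + ENNReal.ofReal ((1 - lam) ^ (1 - c)) * b ^ c
      ≤ (a + b) ^ c := by
  rcases eq_or_ne a ⊤ with rfl | ha
  · rw [top_add, ENNReal.top_rpow_of_pos hc0]; exact le_top
  rcases eq_or_ne b ⊤ with rfl | hb
  · rw [add_top, ENNReal.top_rpow_of_pos hc0]; exact le_top
  have hs : 0 ≤ a.toReal := ENNReal.toReal_nonneg
  have ht : 0 ≤ b.toReal := ENNReal.toReal_nonneg
  rw [← ENNReal.ofReal_toReal ha, ← ENNReal.ofReal_toReal hb,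
    ← ENNReal.ofReal_add hs ht,
    ENNReal.ofReal_rpow_of_nonneg hs hc0.le, ENNReal.ofReal_rpow_of_nonneg ht hc0.le,
    ENNReal.ofReal_rpow_of_nonneg (by positivity) hc0.le,
    ← ENNReal.ofReal_mul (Real.rpow_nonneg hl0.le _),
    ← ENNReal.ofReal_mul (Real.rpow_nonneg (by linarith) _),
    ← ENNReal.ofReal_add (mul_nonneg (Real.rpow_nonneg hl0.le _) (Real.rpow_nonneg hs _))
      (mul_nonneg (Real.rpow_nonneg (by linarith) _) (Real.rpow_nonneg ht _))]
  exact ENNReal.ofReal_le_ofReal (ptwise_real hc0 hc1 hl0 hl1 hs ht)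

-- reverse Minkowski for lintegrals, exponent c ∈ (0,1]
lemma rev_minkowski {X : Type*} [MeasurableSpace X] {μ : Measure X} {u v : X → ℝ≥0∞}
    (hu : AEMeasurable u μ) {c : ℝ} (hc0 : 0 < c) (hc1 : c ≤ 1) :
    (∫⁻ x, (u x) ^ c ∂μ) ^ (1/c) + (∫⁻ x, (v x) ^ c ∂μ) ^ (1/c)
      ≤ (∫⁻ x, (u x + v x) ^ c ∂μ) ^ (1/c) := by
  set U := ∫⁻ x, (u x) ^ c ∂μ with hU
  set V := ∫⁻ x, (v x) ^ c ∂μ with hV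
  set W := ∫⁻ x, (u x + v x) ^ c ∂μ with hW
  have hUW : U ≤ W := lintegral_mono fun x => ENNReal.rpow_le_rpow le_self_add hc0.le
  have hVW : V ≤ W := lintegral_mono fun x => ENNReal.rpow_le_rpow le_add_self hc0.le
  have hmonoU : U ^ (1/c) ≤ W ^ (1/c) := ENNReal.rpow_le_rpow hUW (by positivity)
  have hmonoV : V ^ (1/c) ≤ W ^ (1/c) := ENNReal.rpow_le_rpow hVW (by positivity)
  set A := U ^ (1/c) with hA
  set B := V ^ (1/c) with hB
  rcases eq_or_ne A ⊤ with hAt | hAt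
  · rw [hAt] at hmonoU; rw [top_le_iff.mp hmonoU, hAt]; simp
  rcases eq_or_ne B ⊤ with hBt | hBt
  · rw [hBt] at hmonoV; rw [top_le_iff.mp hmonoV, hBt]; simp
  rcases eq_or_ne A 0 with hA0 | hA0
  · rw [hA0, zero_add]; exact hmonoV
  rcases eq_or_ne B 0 with hB0 | hB0
  · rw [hB0, add_zero]; exact hmonoU
  -- now 0 < A, B < ⊤
  set s := A.toReal with hs
  set t := B.toReal with ht
  have hs0 : 0 < s := ENNReal.toReal_pos hA0 hAt
  have ht0 : 0 < t := ENNReal.toReal_pos hB0 hBt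
  set lam := s / (s + t) with hlam
  have hl0 : 0 < lam := by positivity
  have hl1 : lam < 1 := by
    rw [hlam, div_lt_one (by positivity)]; linarith
  -- integrate the pointwise inequality
  have hptwise : ∀ x, ENNReal.ofReal (lam ^ (1 - c)) * (u x) ^ c
      + ENNReal.ofReal ((1 - lam) ^ (1 - c)) * (v x) ^ c ≤ (u x + v x) ^ c :=
    fun x => ptwise_ennreal hc0 hc1 hl0 hl1 _ _
  have hint : ENNReal.ofReal (lam ^ (1 - c)) * U + ENNReal.ofReal ((1 - lam) ^ (1 - c)) * V
      ≤ W := by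
    rw [hU, hV, ← lintegral_const_mul' _ _ ENNReal.ofReal_ne_top,
      ← lintegral_const_mul' _ _ ENNReal.ofReal_ne_top,
      ← lintegral_add_left' ((hu.pow_const c).const_mul _)]
    exact lintegral_mono hptwise
  -- compute the left side: it equals (A + B)^c
  have hUA : U = ENNReal.ofReal (s ^ c) := by
    have : A ^ c = U := by
      rw [hA, ← ENNReal.rpow_mul, one_div, inv_mul_cancel₀ hc0.ne', ENNReal.rpow_one]
    rw [← this, ← ENNReal.ofReal_toReal hAt, ← hs,
      ENNReal.ofReal_rpow_of_nonneg hs0.le hc0.le]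
  have hVB : V = ENNReal.ofReal (t ^ c) := by
    have : B ^ c = V := by
      rw [hB, ← ENNReal.rpow_mul, one_div, inv_mul_cancel₀ hc0.ne', ENNReal.rpow_one]
    rw [← this, ← ENNReal.ofReal_toReal hBt, ← ht,
      ENNReal.ofReal_rpow_of_nonneg ht0.le hc0.le]
  have hcompute : ENNReal.ofReal (lam ^ (1 - c)) * U + ENNReal.ofReal ((1 - lam) ^ (1 - c)) * V
      = (A + B) ^ c := by
    rw [hUA, hVB, ← ENNReal.ofReal_mul (Real.rpow_nonneg hl0.le _),
      ← ENNReal.ofReal_mul (Real.rpow_nonneg (by linarith) _),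
      ← ENNReal.ofReal_add (mul_nonneg (Real.rpow_nonneg hl0.le _) (Real.rpow_nonneg hs0.le _))
        (mul_nonneg (Real.rpow_nonneg (by linarith) _) (Real.rpow_nonneg ht0.le _)),
      ← ENNReal.ofReal_toReal hAt, ← ENNReal.ofReal_toReal hBt, ← hs, ← ht,
      ← ENNReal.ofReal_add hs0.le ht0.le,
      ENNReal.ofReal_rpow_of_nonneg (by positivity) hc0.le]
    congr 1
    have h1mlam : 1 - lam = t / (s + t) := by rw [hlam]; field_simp; ring
    have e1 : lam ^ (1 - c) * s ^ c = s / (s + t) ^ (1 - c) := by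
      rw [hlam, Real.div_rpow hs0.le (by positivity)]
      rw [div_mul_eq_mul_div, ← Real.rpow_add hs0]
      norm_num
    have e2 : (1 - lam) ^ (1 - c) * t ^ c = t / (s + t) ^ (1 - c) := by
      rw [h1mlam, Real.div_rpow ht0.le (by positivity)]
      rw [div_mul_eq_mul_div, ← Real.rpow_add ht0]
      norm_num
    rw [e1, e2, ← add_div,
      show (s + t) / (s + t) ^ (1 - c) = (s + t) ^ (1:ℝ) / (s + t) ^ (1 - c) by
        rw [Real.rpow_one],
      ← Real.rpow_sub (by positivity)]
    norm_num
  rw [hcompute] at hint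
  calc A + B = ((A + B) ^ c) ^ (1/c) := by
        rw [← ENNReal.rpow_mul, one_div, mul_inv_cancel₀ hc0.ne', ENNReal.rpow_one]
    _ ≤ W ^ (1/c) := ENNReal.rpow_le_rpow hint (by positivity)




-- ENNReal pointwise version
lemma bcl_complex_ennreal {p : ℝ} (hp1 : 1 < p) (hp2 : p ≤ 2) (z w : ℂ) :
    ((‖z‖₊ : ℝ≥0∞) ^ (2:ℝ) + ENNReal.ofReal (p - 1) * (‖w‖₊ : ℝ≥0∞) ^ (2:ℝ)) ^ (p/2)
      ≤ ((‖z + w‖₊ : ℝ≥0∞) ^ p + (‖z - w‖₊ : ℝ≥0∞) ^ p) / 2 := by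
  have hco : ∀ ζ : ℂ, (‖ζ‖₊ : ℝ≥0∞) = ENNReal.ofReal ‖ζ‖ := fun ζ =>
    (ofReal_norm ζ).symm
  rw [hco z, hco w, hco (z+w), hco (z-w),
    ENNReal.ofReal_rpow_of_nonneg (norm_nonneg _) (by norm_num),
    ENNReal.ofReal_rpow_of_nonneg (norm_nonneg _) (by norm_num),
    ENNReal.ofReal_rpow_of_nonneg (norm_nonneg _) (by linarith),
    ENNReal.ofReal_rpow_of_nonneg (norm_nonneg _) (by linarith),
    ← ENNReal.ofReal_mul (by linarith),
    ← ENNReal.ofReal_add (Real.rpow_nonneg (norm_nonneg _) _)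
      (mul_nonneg (by linarith) (Real.rpow_nonneg (norm_nonneg _) _)),
    ENNReal.ofReal_rpow_of_nonneg
      (add_nonneg (Real.rpow_nonneg (norm_nonneg _) _)
        (mul_nonneg (by linarith) (Real.rpow_nonneg (norm_nonneg _) _))) (by linarith),
    ← ENNReal.ofReal_add (by positivity) (by positivity),
    show ((2:ℝ≥0∞) = ENNReal.ofReal (2:ℝ)) by norm_num,
    ← ENNReal.ofReal_div_of_pos (by norm_num)]
  apply ENNReal.ofReal_le_ofReal
  have h2 : ∀ r : ℝ, 0 ≤ r → r ^ (2:ℝ) = r ^ (2:ℕ) := fun r hr => by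
    rw [show (2:ℝ) = ((2:ℕ):ℝ) by norm_num, Real.rpow_natCast]
  rw [h2 _ (norm_nonneg z), h2 _ (norm_nonneg w)]
  exact bcl_complex hp1 hp2 z w

theorem stmt_18 {X : Type*} [MeasurableSpace X] (μ : Measure X)
    (p : ℝ) (hp1 : 1 < p) (hp2 : p ≤ 2)
    (f g : Lp ℂ (ENNReal.ofReal p) μ) :
    ‖(2 : ℝ)⁻¹ • (f + g)‖ ^ 2 + (p - 1) * ‖(2 : ℝ)⁻¹ • (f - g)‖ ^ 2
      ≤ (‖f‖ ^ 2 + ‖g‖ ^ 2) / 2 := by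
  have hp0 : (0:ℝ) < p := by linarith
  have hq0 : ENNReal.ofReal p ≠ 0 := by
    rw [Ne, ENNReal.ofReal_eq_zero]; push_neg; linarith
  have hqt : ENNReal.ofReal p ≠ ⊤ := ENNReal.ofReal_ne_top
  have hqr : (ENNReal.ofReal p).toReal = p := ENNReal.toReal_ofReal hp0.le
  set x := (2 : ℝ)⁻¹ • (f + g) with hx
  set y := (2 : ℝ)⁻¹ • (f - g) with hy
  -- lintegral quantities
  set U := ∫⁻ a, (‖x a‖₊ : ℝ≥0∞) ^ p ∂μ with hU
  set V := ∫⁻ a, (‖y a‖₊ : ℝ≥0∞) ^ p ∂μ with hV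
  set F := ∫⁻ a, (‖f a‖₊ : ℝ≥0∞) ^ p ∂μ with hF
  set G := ∫⁻ a, (‖g a‖₊ : ℝ≥0∞) ^ p ∂μ with hG
  have heLp : ∀ h : Lp ℂ (ENNReal.ofReal p) μ, eLpNorm h (ENNReal.ofReal p) μ
      = (∫⁻ a, (‖h a‖₊ : ℝ≥0∞) ^ p ∂μ) ^ (1/p) := fun h => by
    rw [eLpNorm_eq_lintegral_rpow_enorm_toReal hq0 hqt, hqr]
    rfl
  have hnorm : ∀ h : Lp ℂ (ENNReal.ofReal p) μ, ‖h‖ = ((∫⁻ a, (‖h a‖₊ : ℝ≥0∞) ^ p ∂μ) ^ (1/p)).toReal :=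
    fun h => by rw [Lp.norm_def, heLp h]
  have hfin : ∀ h : Lp ℂ (ENNReal.ofReal p) μ, (∫⁻ a, (‖h a‖₊ : ℝ≥0∞) ^ p ∂μ) ≠ ⊤ := fun h => by
    have h1 : (∫⁻ a, (‖h a‖₊ : ℝ≥0∞) ^ p ∂μ) ^ (1/p) ≠ ⊤ := by
      rw [← heLp h]; exact Lp.eLpNorm_ne_top h
    intro hcon
    rw [hcon, ENNReal.top_rpow_of_pos (by positivity)] at h1
    exact h1 rfl
  -- the key ENNReal inequality
  have key : U ^ (2/p) + ENNReal.ofReal (p-1) * V ^ (2/p) ≤ (F ^ (2/p) + G ^ (2/p)) / 2 := by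
    have hc0 : 0 < p/2 := by linarith
    have hc1 : p/2 ≤ 1 := by linarith
    have hinv : 1/(p/2) = 2/p := by field_simp
    set u : X → ℝ≥0∞ := fun a => (‖x a‖₊ : ℝ≥0∞) ^ (2:ℝ) with hu
    set v : X → ℝ≥0∞ := fun a => ENNReal.ofReal (p-1) * (‖y a‖₊ : ℝ≥0∞) ^ (2:ℝ) with hv
    have hxm : AEMeasurable u μ := ((Lp.aestronglyMeasurable x).enorm).pow_const _
    have mink := rev_minkowski (μ := μ) (v := v) hxm hc0 hc1
    have e1 : ∀ z : ℂ, ((‖z‖₊ : ℝ≥0∞) ^ (2:ℝ)) ^ (p/2) = (‖z‖₊ : ℝ≥0∞) ^ p := fun z => by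
      rw [← ENNReal.rpow_mul, show (2:ℝ) * (p/2) = p by ring]
    have eU : (∫⁻ a, u a ^ (p/2) ∂μ) = U := by
      rw [hU]; congr 1; funext a; exact e1 _
    have eV : (∫⁻ a, v a ^ (p/2) ∂μ) = ENNReal.ofReal (p-1) ^ (p/2) * V := by
      have : ∀ a, v a ^ (p/2)
          = ENNReal.ofReal (p-1) ^ (p/2) * (‖y a‖₊ : ℝ≥0∞) ^ p := fun a => by
        rw [hv, ENNReal.mul_rpow_of_nonneg _ _ hc0.le, e1]
      simp_rw [this]
      rw [lintegral_const_mul' _ _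
        (ENNReal.rpow_ne_top_of_nonneg hc0.le ENNReal.ofReal_ne_top), hV]
    rw [eU, eV, hinv] at mink
    have eVk : (ENNReal.ofReal (p-1) ^ (p/2) * V) ^ (2/p)
        = ENNReal.ofReal (p-1) * V ^ (2/p) := by
      rw [ENNReal.mul_rpow_of_nonneg _ _ (by positivity), ← ENNReal.rpow_mul,
        show (p/2) * (2/p) = 1 by field_simp, ENNReal.rpow_one]
    rw [eVk] at mink
    -- now bound the integral of (u+v)^(p/2)
    have hfg : ∀ᵐ a ∂μ, f a = x a + y a ∧ g a = x a - y a := by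
      have h1 : ⇑x =ᵐ[μ] (2:ℝ)⁻¹ • ⇑(f + g) := Lp.coeFn_smul _ _
      have h2 : ⇑(f + g) =ᵐ[μ] ⇑f + ⇑g := Lp.coeFn_add f g
      have h3 : ⇑y =ᵐ[μ] (2:ℝ)⁻¹ • ⇑(f - g) := Lp.coeFn_smul _ _
      have h4 : ⇑(f - g) =ᵐ[μ] ⇑f - ⇑g := Lp.coeFn_sub f g
      filter_upwards [h1, h2, h3, h4] with a ha1 ha2 ha3 ha4
      rw [ha1, Pi.smul_apply, ha2, ha3, Pi.smul_apply, ha4]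
      simp only [Pi.add_apply, Pi.sub_apply]
      constructor
      · rw [Complex.real_smul, Complex.real_smul, Complex.ofReal_inv, Complex.ofReal_ofNat]
        ring
      · rw [Complex.real_smul, Complex.real_smul, Complex.ofReal_inv, Complex.ofReal_ofNat]
        ring
    have hptw : ∀ᵐ a ∂μ, (u a + v a) ^ (p/2)
        ≤ ((‖f a‖₊ : ℝ≥0∞) ^ p + (‖g a‖₊ : ℝ≥0∞) ^ p) / 2 := by
      filter_upwards [hfg] with a ⟨haf, hag⟩
      rw [haf, hag]
      exact bcl_complex_ennreal hp1 hp2 (x a) (y a)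
    have hint : (∫⁻ a, (u a + v a) ^ (p/2) ∂μ) ≤ (F + G) / 2 := by
      refine le_trans (lintegral_mono_ae hptw) ?_
      simp_rw [div_eq_mul_inv]
      rw [lintegral_mul_const' _ _ (by simp), lintegral_add_left' (f := fun a => (‖f a‖₊ : ℝ≥0∞) ^ p)
        (((Lp.aestronglyMeasurable f).enorm).pow_const p), hF, hG]
    have h2p : (1:ℝ) ≤ 2/p := by
      rw [le_div_iff₀ hp0]; linarith
    have hhalf : ∀ a b : ℝ≥0∞, (a + b)/2 = 1/2 * a + 1/2 * b := fun a b => by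
      rw [ENNReal.div_eq_inv_mul, mul_add, one_div]
    have pm : ((F + G)/2) ^ (2/p) ≤ (F ^ (2/p) + G ^ (2/p)) / 2 := by
      rw [hhalf F G, hhalf (F ^ (2/p)) (G ^ (2/p))]
      exact ENNReal.rpow_arith_mean_le_arith_mean2_rpow (1/2) (1/2) F G
        (by rw [← ENNReal.add_halves 1]; norm_num) h2p
    calc U ^ (2/p) + ENNReal.ofReal (p-1) * V ^ (2/p)
        ≤ (∫⁻ a, (u a + v a) ^ (p/2) ∂μ) ^ (2/p) := mink
      _ ≤ ((F + G)/2) ^ (2/p) := ENNReal.rpow_le_rpow hint (by positivity)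
      _ ≤ (F ^ (2/p) + G ^ (2/p)) / 2 := pm
  -- convert to the real goal
  have hsq : ∀ W : ℝ≥0∞, W ≠ ⊤ → ((W ^ (1/p)).toReal) ^ 2 = (W ^ (2/p)).toReal := by
    intro W hW
    rw [← ENNReal.toReal_pow, ← ENNReal.rpow_natCast (W ^ (1/p)), ← ENNReal.rpow_mul,
      show (1/p) * ((2:ℕ):ℝ) = 2/p by push_cast; ring]
  have hfin2 : ∀ W : ℝ≥0∞, W ≠ ⊤ → W ^ (2/p) ≠ ⊤ := fun W hW =>
    ENNReal.rpow_ne_top_of_nonneg (by positivity) hW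
  rw [hnorm x, hnorm y, hnorm f, hnorm g, hsq U (hfin x), hsq V (hfin y), hsq F (hfin f),
    hsq G (hfin g)]
  have := ENNReal.toReal_mono (ne_of_lt (ENNReal.div_lt_top
    (ENNReal.add_ne_top.mpr ⟨hfin2 F (hfin f), hfin2 G (hfin g)⟩) (by norm_num))) key
  rw [ENNReal.toReal_add (hfin2 U (hfin x)) (by
      exact ENNReal.mul_ne_top ENNReal.ofReal_ne_top (hfin2 V (hfin y))),
    ENNReal.toReal_mul, ENNReal.toReal_ofReal (by linarith)] at this
  refine le_trans this ?_
  rw [ENNReal.toReal_div, ENNReal.toReal_add (hfin2 F (hfin f)) (hfin2 G (hfin g))]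
  norm_num
end
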